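/- arXiv:1904.06547 — 3 statements merged into one kernel-verified Lean document; each statement's English description precedes it below -/
import Mathlib

section
/- Consider the Euler discretization x(k+1) = x(k) + ε f(k, x(k)), ε > 0, whose trajectories evolve on a compact convex invariant set Ω ⊂ ℝⁿ. Suppose f is C¹ in its second argument, the entries of the Jacobian (∂f/∂x)(k,a) are bounded uniformly over k ∈ ℕ and a ∈ Ω, and for every k ∈ ℕ and a ∈ Ω the matrix (∂f/∂x)(k,a) is tridiagonal with strictly positive entries on the super- and sub-diagonal, these off-diagonal entries being bounded below by a positive constant uniformly in k and a. Then there exists ε₀ > 0 such that for every ε ∈ (0, ε₀), the matrix F(k,a,b) := ∫₀¹ ( I + ε (∂f/∂x)(k, ra + (1−r)b) ) dr is oscillatory for all k ∈ ℕ and all a, b ∈ Ω. -/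
open Matrix MeasureTheory Filter Topology

/-- A matrix is totally positive if every minor is strictly positive. -/
def IsTP {n m : ℕ} (A : Matrix (Fin n) (Fin m) ℝ) : Prop :=
  ∀ (r : ℕ) (rows : Fin r → Fin n) (cols : Fin r → Fin m),
    StrictMono rows → StrictMono cols → 0 < (A.submatrix rows cols).det

/-- A matrix is totally nonnegative if every minor is nonnegative. -/
def IsTN {n m : ℕ} (A : Matrix (Fin n) (Fin m) ℝ) : Prop :=
  ∀ (r : ℕ) (rows : Fin r → Fin n) (cols : Fin r → Fin m),
    StrictMono rows → StrictMono cols → 0 ≤ (A.submatrix rows cols).det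

/-- A square matrix is oscillatory if it is TN and some positive power of it is TP. -/
def IsOsc {n : ℕ} (A : Matrix (Fin n) (Fin n) ℝ) : Prop :=
  IsTN A ∧ ∃ k : ℕ, 0 < k ∧ IsTP (A ^ k)

/-- The Jacobian matrix of a map `g : ℝⁿ → ℝⁿ` at a point `x`. -/
noncomputable def jac {n : ℕ} (g : (Fin n → ℝ) → (Fin n → ℝ)) (x : Fin n → ℝ) :
    Matrix (Fin n) (Fin n) ℝ :=
  Matrix.of fun i j => fderiv ℝ g x (Pi.single j 1) i

open Finset

noncomputable def monoSet (r N : ℕ) : Finset (Fin r → Fin N) :=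
  @Finset.filter _ (fun g => StrictMono g) (Classical.decPred _) Finset.univ

theorem mem_monoSet {r N : ℕ} {g : Fin r → Fin N} : g ∈ monoSet r N ↔ StrictMono g := by
  simp [monoSet]

theorem cauchyBinet {r N : ℕ} (X : Matrix (Fin r) (Fin N) ℝ) (Y : Matrix (Fin N) (Fin r) ℝ) :
    (X * Y).det = ∑ g ∈ monoSet r N, (X.submatrix id g).det * (Y.submatrix g id).det := by
  classical
  have step1 : (X * Y).det
      = ∑ p : Fin r → Fin N, (X.submatrix id p).det * ∏ i, Y (p i) i := by
    rw [det_apply']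
    simp only [mul_apply, Finset.prod_univ_sum, Fintype.piFinset_univ, Finset.mul_sum]
    rw [Finset.sum_comm]
    refine Finset.sum_congr rfl fun p _ => ?_
    rw [det_apply', Finset.sum_mul]
    refine Finset.sum_congr rfl fun σ _ => ?_
    rw [Finset.prod_mul_distrib]
    simp only [Matrix.submatrix_apply, id_eq]
    ring
  rw [step1]
  rw [← Finset.sum_filter_add_sum_filter_not Finset.univ (fun p : Fin r → Fin N => Function.Injective p)]
  have h0 : ∑ p ∈ Finset.univ.filter (fun p : Fin r → Fin N => ¬ Function.Injective p),
      (X.submatrix id p).det * ∏ i, Y (p i) i = 0 := by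
    refine Finset.sum_eq_zero fun p hp => ?_
    simp only [Finset.mem_filter] at hp
    obtain ⟨i, j, hij, hne⟩ := Function.not_injective_iff.mp hp.2
    rw [Matrix.det_zero_of_column_eq hne (fun k => by simp [hij]), zero_mul]
  rw [h0, add_zero]
  have key : ∑ q ∈ (monoSet r N) ×ˢ (Finset.univ : Finset (Equiv.Perm (Fin r))),
        ((X.submatrix id (q.1 ∘ q.2)).det * ∏ i, Y ((q.1 ∘ q.2) i) i)
      = ∑ p ∈ Finset.univ.filter (fun p : Fin r → Fin N => Function.Injective p),
        (X.submatrix id p).det * ∏ i, Y (p i) i := by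
    refine Finset.sum_bij (fun q _ => q.1 ∘ q.2) ?_ ?_ ?_ ?_
    · rintro ⟨g, σ⟩ hq
      simp only [Finset.mem_product, mem_monoSet] at hq
      simp only [Finset.mem_filter, Finset.mem_univ, true_and]
      exact hq.1.injective.comp σ.injective
    · rintro ⟨g, σ⟩ hq ⟨g', σ'⟩ hq' h
      simp only [Finset.mem_product, mem_monoSet] at hq hq'
      have h2 : g ∘ ⇑σ = g' ∘ ⇑σ' := h
      haveI : WellFoundedLT (Fin r) := Finite.to_wellFoundedLT
      have hrange : Set.range g = Set.range g' := by
        rw [← σ.surjective.range_comp g, ← σ'.surjective.range_comp g', h2]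
      have hg : g = g' := hq.1.range_inj hq'.1 |>.mp hrange
      subst hg
      have hσ : σ = σ' := by
        ext l
        exact Fin.val_eq_of_eq (hq.1.injective (congrFun h2 l))
      simp [hσ]
    · intro p hp
      simp only [Finset.mem_filter, Finset.mem_univ, true_and] at hp
      set sp : Finset (Fin N) := Finset.univ.image p with hsp
      have hcard : sp.card = r := by
        rw [hsp, Finset.card_image_of_injective _ hp, Finset.card_univ, Fintype.card_fin]
      have hmem : ∀ l, p l ∈ sp := fun l => Finset.mem_image_of_mem p (Finset.mem_univ l)
      have qinj : Function.Injective (fun l => (⟨p l, hmem l⟩ : {x // x ∈ sp})) := by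
        intro a b hab
        exact hp (congrArg Subtype.val hab)
      have heinj : Function.Injective
          (fun l => (sp.orderIsoOfFin hcard).symm ⟨p l, hmem l⟩) :=
        (sp.orderIsoOfFin hcard).symm.injective.comp qinj
      have hebij : Function.Bijective
          (fun l => (sp.orderIsoOfFin hcard).symm ⟨p l, hmem l⟩) :=
        Finite.injective_iff_bijective.mp heinj
      refine ⟨⟨fun k => sp.orderEmbOfFin hcard k, Equiv.ofBijective _ hebij⟩, ?_, ?_⟩
      · simp only [Finset.mem_product, mem_monoSet, Finset.mem_univ, and_true]
        exact (sp.orderEmbOfFin hcard).strictMono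
      · funext l
        show (sp.orderEmbOfFin hcard) ((sp.orderIsoOfFin hcard).symm ⟨p l, hmem l⟩) = p l
        rw [← Finset.coe_orderIsoOfFin_apply, OrderIso.apply_symm_apply]
    · intro q hq
      rfl
  rw [← key, Finset.sum_product]
  refine Finset.sum_congr rfl fun g hg => ?_
  have hXg : ∀ σ : Equiv.Perm (Fin r),
      (X.submatrix id (g ∘ σ)).det = (Equiv.Perm.sign σ : ℤ) * (X.submatrix id g).det := by
    intro σ
    have : X.submatrix id (g ∘ σ) = (X.submatrix id g).submatrix id σ := by
      rw [Matrix.submatrix_submatrix]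
      rfl
    rw [this, Matrix.det_permute']
  have hdetY : (Y.submatrix g id).det
      = ∑ σ : Equiv.Perm (Fin r), (Equiv.Perm.sign σ : ℤ) * ∏ i, Y (g (σ i)) i := by
    rw [det_apply']
    rfl
  rw [hdetY, Finset.mul_sum]
  refine Finset.sum_congr rfl fun σ _ => ?_
  rw [hXg σ]
  simp only [Function.comp_apply]
  ring

theorem perm_eq_one_of_strictMono {r : ℕ} (σ : Equiv.Perm (Fin r)) (h : StrictMono σ) : σ = 1 := by
  have hcard : (Finset.univ : Finset (Fin r)).card = r := by simp
  have h1 := Finset.orderEmbOfFin_unique hcard (fun x => Finset.mem_univ (σ x)) h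
  have h2 := Finset.orderEmbOfFin_unique hcard (fun x => Finset.mem_univ x) strictMono_id
  ext l
  have := (congrFun (h1.trans h2.symm) l)
  simp [this]

theorem det_submatrix_lowerBidiag {N r : ℕ} (L : Matrix (Fin N) (Fin N) ℝ)
    (hL : ∀ i j : Fin N, (j:ℕ) ≠ (i:ℕ) → (j:ℕ) + 1 ≠ (i:ℕ) → L i j = 0)
    (rows cols : Fin r → Fin N) (hr : StrictMono rows) (hc : StrictMono cols) :
    (L.submatrix rows cols).det = ∏ k, L (rows k) (cols k) := by
  rw [det_apply']
  refine (Finset.sum_eq_single 1 ?_ ?_).trans ?_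
  · intro σ _ hσ1
    by_contra hne
    have hfac : ∀ k, L (rows (σ k)) (cols k) ≠ 0 := by
      intro k hk0
      apply hne
      have hzero : (∏ k, (L.submatrix rows cols) (σ k) k) = 0 :=
        Finset.prod_eq_zero (Finset.mem_univ k) (by simpa using hk0)
      rw [hzero, mul_zero]
    have hbound : ∀ k, (cols k : ℕ) = (rows (σ k) : ℕ) ∨ (cols k : ℕ) + 1 = (rows (σ k) : ℕ) := by
      intro k
      by_contra hcon
      push_neg at hcon
      exact hfac k (hL _ _ hcon.1 hcon.2)
    have hmono : StrictMono σ := by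
      intro k k' hkk'
      have h1 : (rows (σ k) : ℕ) ≤ (cols k : ℕ) + 1 := by rcases hbound k with h|h <;> omega
      have h2 : (cols k' : ℕ) ≤ (rows (σ k') : ℕ) := by rcases hbound k' with h|h <;> omega
      have h3 : (cols k : ℕ) < (cols k' : ℕ) := hc hkk'
      rcases lt_trichotomy (σ k) (σ k') with h|h|h
      · exact h
      · exact absurd (σ.injective h) hkk'.ne
      · exfalso
        have h4 := hr h
        rw [Fin.lt_iff_val_lt_val] at h4
        omega
    exact hσ1 (perm_eq_one_of_strictMono σ hmono)
  · intro h1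
    exact absurd (Finset.mem_univ 1) h1
  · simp [Matrix.submatrix_apply]

theorem det_submatrix_upperBidiag {N r : ℕ} (U : Matrix (Fin N) (Fin N) ℝ)
    (hU : ∀ i j : Fin N, (j:ℕ) ≠ (i:ℕ) → (i:ℕ) + 1 ≠ (j:ℕ) → U i j = 0)
    (rows cols : Fin r → Fin N) (hr : StrictMono rows) (hc : StrictMono cols) :
    (U.submatrix rows cols).det = ∏ k, U (rows k) (cols k) := by
  have hT : (U.submatrix rows cols) = (Uᵀ.submatrix cols rows)ᵀ := by
    ext i j
    simp
  rw [hT, Matrix.det_transpose,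
    det_submatrix_lowerBidiag Uᵀ (fun i j h1 h2 => hU j i (Ne.symm h1) h2) cols rows hc hr]
  rfl

noncomputable def padA (n : ℕ) (A : Matrix (Fin n) (Fin n) ℝ) : ℕ → ℕ → ℝ :=
  fun i j => if h : i < n ∧ j < n then A ⟨i, h.1⟩ ⟨j, h.2⟩ else if i = j then 1 else 0

theorem padA_eq (n : ℕ) (A : Matrix (Fin n) (Fin n) ℝ) (i j : Fin n) :
    padA n A (i:ℕ) (j:ℕ) = A i j := by
  simp [padA, i.isLt, j.isLt]

noncomputable def uSeq (n : ℕ) (A : Matrix (Fin n) (Fin n) ℝ) : ℕ → ℝ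
  | 0 => padA n A 0 0
  | (i+1) => padA n A (i+1) (i+1) - padA n A (i+1) i * padA n A i (i+1) / uSeq n A i

noncomputable def Lmat (n : ℕ) (A : Matrix (Fin n) (Fin n) ℝ) : Matrix (Fin n) (Fin n) ℝ :=
  Matrix.of fun i j => if i = j then 1 else if (j:ℕ)+1 = (i:ℕ) then A i j / uSeq n A (j:ℕ) else 0

noncomputable def Rmat (n : ℕ) (A : Matrix (Fin n) (Fin n) ℝ) : Matrix (Fin n) (Fin n) ℝ :=
  Matrix.of fun i j => if i = j then uSeq n A (i:ℕ) else if (i:ℕ)+1 = (j:ℕ) then A i j else 0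

theorem LU_factor (n : ℕ) (A : Matrix (Fin n) (Fin n) ℝ)
    (hzero : ∀ i j : Fin n, ((i:ℕ) + 2 ≤ (j:ℕ) ∨ (j:ℕ) + 2 ≤ (i:ℕ)) → A i j = 0)
    (hu : ∀ i : ℕ, uSeq n A i ≠ 0) :
    A = Lmat n A * Rmat n A := by
  ext i j
  rw [Matrix.mul_apply]
  have hsplit : ∀ x : Fin n, Lmat n A i x * Rmat n A x j
      = (if x = i then Rmat n A i j else 0)
        + (if (x:ℕ)+1 = (i:ℕ) then (A i x / uSeq n A (x:ℕ)) * Rmat n A x j else 0) := by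
    intro x
    by_cases h1 : i = x
    · rw [← h1]
      have h2 : ¬ ((i:ℕ)+1 = (i:ℕ)) := by omega
      simp [Lmat, h2]
    · by_cases h2 : (x:ℕ)+1 = (i:ℕ)
      · simp only [Lmat, Matrix.of_apply, if_neg h1, if_pos h2,
          if_neg (fun (h : x = i) => h1 h.symm)]
        ring
      · simp only [Lmat, Matrix.of_apply, if_neg h1, if_neg h2,
          if_neg (fun (h : x = i) => h1 h.symm)]
        ring
  rw [Finset.sum_congr rfl fun x _ => hsplit x, Finset.sum_add_distrib,
    Finset.sum_ite_eq' Finset.univ i fun _ => Rmat n A i j]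
  simp only [Finset.mem_univ, if_true]
  rcases Nat.eq_zero_or_pos (i : ℕ) with h0 | hpos
  · have hnone : ∀ x : Fin n, ¬ ((x:ℕ)+1 = (i:ℕ)) := fun x => by omega
    rw [Finset.sum_eq_zero (fun x _ => if_neg (hnone x)), add_zero]
    -- Rmat i j = A i j  when i.val = 0
    rcases lt_trichotomy ((i:ℕ)+1) (j:ℕ) with hj | hj | hj
    · -- j ≥ i+2 : Rmat i j = 0 = A i j
      have hij : ¬ (i = j) := by intro h; subst h; omega
      have hij2 : ¬ ((i:ℕ)+1 = (j:ℕ)) := by omega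
      rw [show Rmat n A i j = 0 by simp [Rmat, hij, hij2]]
      exact hzero i j (Or.inl (by omega))
    · -- j = i+1
      have hij : ¬ (i = j) := by intro h; subst h; omega
      simp [Rmat, hij, hj]
    · -- j ≤ i, with i.val = 0 so j = i
      have hij : i = j := by apply Fin.ext; omega
      subst hij
      have : uSeq n A (i:ℕ) = padA n A 0 0 := by rw [h0]; rfl
      rw [show Rmat n A i i = uSeq n A (i:ℕ) by simp [Rmat], this]
      have := padA_eq n A i i
      rw [h0] at this
      rw [this]
  · -- i.val = m+1
    set x₀ : Fin n := ⟨(i:ℕ)-1, by omega⟩ with hx₀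
    have hx₀v : (x₀:ℕ) = (i:ℕ) - 1 := rfl
    have hsum2 : (∑ x : Fin n, if (x:ℕ)+1 = (i:ℕ) then (A i x / uSeq n A (x:ℕ)) * Rmat n A x j else 0)
        = (A i x₀ / uSeq n A (x₀:ℕ)) * Rmat n A x₀ j := by
      rw [Finset.sum_eq_single x₀]
      · rw [if_pos (by omega)]
      · intro x _ hx
        apply if_neg
        intro hcon
        apply hx
        apply Fin.ext
        omega
      · intro h; exact absurd (Finset.mem_univ x₀) h
    rw [hsum2]
    -- uSeq at i.val
    have hiu : uSeq n A (i:ℕ)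
        = padA n A (i:ℕ) (i:ℕ) - padA n A (i:ℕ) ((x₀:ℕ)) * padA n A ((x₀:ℕ)) (i:ℕ) / uSeq n A (x₀:ℕ) := by
      have h1 : (i:ℕ) = ((i:ℕ)-1)+1 := by omega
      rw [h1]
      rw [show uSeq n A (((i:ℕ)-1)+1)
        = padA n A (((i:ℕ)-1)+1) (((i:ℕ)-1)+1)
          - padA n A (((i:ℕ)-1)+1) ((i:ℕ)-1) * padA n A ((i:ℕ)-1) (((i:ℕ)-1)+1) / uSeq n A ((i:ℕ)-1)
        from rfl]
    have hAix₀ : padA n A (i:ℕ) (x₀:ℕ) = A i x₀ := padA_eq n A i x₀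
    have hAx₀i : padA n A (x₀:ℕ) (i:ℕ) = A x₀ i := padA_eq n A x₀ i
    have hAii : padA n A (i:ℕ) (i:ℕ) = A i i := padA_eq n A i i
    rcases lt_trichotomy ((i:ℕ)+1) (j:ℕ) with hj | hj | hj
    · -- j ≥ i+2: everything 0
      have hij : ¬ (i = j) := by intro h; subst h; omega
      have h5 : ¬ ((i:ℕ)+1 = (j:ℕ)) := by omega
      have h6 : ¬ (x₀ = j) := by intro h; subst h; omega
      have h7 : ¬ ((x₀:ℕ)+1 = (j:ℕ)) := by omega
      rw [show Rmat n A i j = 0 by simp [Rmat, hij, h5],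
          show Rmat n A x₀ j = 0 by simp [Rmat, h6, h7]]
      rw [(hzero i j (Or.inl (by omega)))]
      ring
    · -- j = i+1
      have hij : ¬ (i = j) := by intro h; subst h; omega
      have h6 : ¬ (x₀ = j) := by intro h; subst h; omega
      have h7 : ¬ ((x₀:ℕ)+1 = (j:ℕ)) := by omega
      rw [show Rmat n A i j = A i j by simp [Rmat, hij, hj],
          show Rmat n A x₀ j = 0 by simp [Rmat, h6, h7]]
      ring
    · rcases lt_trichotomy ((j:ℕ)+1) (i:ℕ) with hj2 | hj2 | hj2
      · -- j ≤ i-2: all zero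
        have hij : ¬ (i = j) := by intro h; subst h; omega
        have h5 : ¬ ((i:ℕ)+1 = (j:ℕ)) := by omega
        have h6 : ¬ (x₀ = j) := by intro h; subst h; omega
        have h7 : ¬ ((x₀:ℕ)+1 = (j:ℕ)) := by omega
        rw [show Rmat n A i j = 0 by simp [Rmat, hij, h5],
            show Rmat n A x₀ j = 0 by simp [Rmat, h6, h7]]
        rw [(hzero i j (Or.inr (by omega)))]
        ring
      · -- j = i-1, i.e. j = x₀
        have hjx : x₀ = j := by apply Fin.ext; omega
        have hij : ¬ (i = j) := by intro h; subst h; omega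
        have h5 : ¬ ((i:ℕ)+1 = (j:ℕ)) := by omega
        rw [show Rmat n A i j = 0 by simp [Rmat, hij, h5]]
        subst hjx
        rw [show Rmat n A x₀ x₀ = uSeq n A (x₀:ℕ) by simp [Rmat]]
        rw [div_mul_eq_mul_div, mul_div_assoc, div_self (hu _), mul_one, zero_add]
      · -- j = i
        have hij : i = j := by apply Fin.ext; omega
        subst hij
        have hine : ¬ ((i:ℕ)+1 = (i:ℕ)) := by omega
        rw [show Rmat n A i i = uSeq n A (i:ℕ) by simp [Rmat],
            show Rmat n A x₀ i = A x₀ i by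
              simp only [Rmat, Matrix.of_apply]
              rw [if_neg (fun h => absurd (congrArg Fin.val h) (by simp [hx₀v]; omega)),
                if_pos (by omega)]]
        rw [hiu, hAii, hAix₀, hAx₀i]
        have hux := hu (x₀:ℕ)
        field_simp
        ring




/-- distance between two index tuples -/
noncomputable def Dd {r n : ℕ} (I J : Fin r → Fin n) : ℕ :=
  ∑ k, ((I k : ℕ) - (J k : ℕ) + ((J k : ℕ) - (I k : ℕ)))

theorem isOsc_of_tridiag (n : ℕ) (A : Matrix (Fin n) (Fin n) ℝ)
    (hdiag : ∀ i, 3/4 ≤ A i i)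
    (hsup : ∀ i j : Fin n, (j:ℕ) = (i:ℕ)+1 → 0 < A i j ∧ 0 < A j i)
    (hzero : ∀ i j : Fin n, ((i:ℕ) + 2 ≤ (j:ℕ) ∨ (j:ℕ) + 2 ≤ (i:ℕ)) → A i j = 0)
    (hsmall : ∀ i j : Fin n, (j:ℕ) = (i:ℕ)+1 → A i j * A j i ≤ 1/16) :
    IsOsc A := by
  classical
  -- bounds on uSeq
  have hpad_diag : ∀ i : ℕ, 3/4 ≤ padA n A i i := by
    intro i
    by_cases h : i < n
    · rw [show padA n A i i = A ⟨i,h⟩ ⟨i,h⟩ from dif_pos ⟨h,h⟩]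
      exact hdiag _
    · rw [show padA n A i i = 1 by rw [padA]; rw [dif_neg (by omega), if_pos rfl]]
      norm_num
  have hpad_prod : ∀ i : ℕ, 0 ≤ padA n A (i+1) i * padA n A i (i+1)
      ∧ padA n A (i+1) i * padA n A i (i+1) ≤ 1/16 := by
    intro i
    by_cases h : i + 1 < n
    · have hi : i < n := by omega
      have e1 : padA n A (i+1) i = A ⟨i+1,h⟩ ⟨i,hi⟩ := dif_pos ⟨h,hi⟩
      have e2 : padA n A i (i+1) = A ⟨i,hi⟩ ⟨i+1,h⟩ := dif_pos ⟨hi,h⟩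
      have hs := hsup ⟨i,hi⟩ ⟨i+1,h⟩ rfl
      have hm := hsmall ⟨i,hi⟩ ⟨i+1,h⟩ rfl
      rw [e1, e2]
      constructor
      · exact le_of_lt (mul_pos hs.2 hs.1)
      · calc A ⟨i+1,h⟩ ⟨i,hi⟩ * A ⟨i,hi⟩ ⟨i+1,h⟩
            = A ⟨i,hi⟩ ⟨i+1,h⟩ * A ⟨i+1,h⟩ ⟨i,hi⟩ := by ring
          _ ≤ 1/16 := hm
    · have e1 : padA n A (i+1) i = 0 := by
        rw [padA]
        rw [dif_neg (by omega), if_neg (by omega)]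
      rw [e1, zero_mul]
      norm_num
  have hu : ∀ i : ℕ, 1/2 ≤ uSeq n A i := by
    intro i
    induction i with
    | zero =>
      show (1:ℝ)/2 ≤ padA n A 0 0
      linarith [hpad_diag 0]
    | succ i ih =>
      have hp := hpad_prod i
      have hdiv : padA n A (i+1) i * padA n A i (i+1) / uSeq n A i ≤ 1/8 := by
        calc padA n A (i+1) i * padA n A i (i+1) / uSeq n A i
            ≤ (1/16)/(1/2) := div_le_div₀ (by norm_num) hp.2 (by norm_num) ih
          _ = 1/8 := by norm_num
      have hd := hpad_diag (i+1)
      show (1:ℝ)/2 ≤ padA n A (i+1) (i+1) - padA n A (i+1) i * padA n A i (i+1) / uSeq n A i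
      linarith
  have hune : ∀ i : ℕ, uSeq n A i ≠ 0 := fun i => by linarith [hu i]
  have hupos : ∀ i : ℕ, 0 < uSeq n A i := fun i => by linarith [hu i]
  have hLU := LU_factor n A hzero hune
  -- entry facts for L and R
  have hLdiag : ∀ i : Fin n, Lmat n A i i = 1 := by
    intro i; simp [Lmat]
  have hLsub : ∀ i j : Fin n, (j:ℕ)+1 = (i:ℕ) → 0 < Lmat n A i j := by
    intro i j h
    have hne : ¬ (i = j) := fun hh => by rw [hh] at h; omega
    rw [show Lmat n A i j = A i j / uSeq n A (j:ℕ) by simp [Lmat, hne, h]]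
    exact div_pos (hsup j i (by omega)).2 (hupos _)
  have hLnn : ∀ i j : Fin n, 0 ≤ Lmat n A i j := by
    intro i j
    by_cases h1 : i = j
    · rw [h1, hLdiag]; norm_num
    · by_cases h2 : (j:ℕ)+1 = (i:ℕ)
      · exact le_of_lt (hLsub i j h2)
      · rw [show Lmat n A i j = 0 by simp [Lmat, h1, h2]]
  have hLlower : ∀ i j : Fin n, (j:ℕ) ≠ (i:ℕ) → (j:ℕ) + 1 ≠ (i:ℕ) → Lmat n A i j = 0 := by
    intro i j h1 h2
    have hne : ¬ (i = j) := fun hh => h1 (by rw [hh])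
    simp [Lmat, hne, h2]
  have hRdiag : ∀ i : Fin n, 0 < Rmat n A i i := by
    intro i
    rw [show Rmat n A i i = uSeq n A (i:ℕ) by simp [Rmat]]
    exact hupos _
  have hRsup : ∀ i j : Fin n, (i:ℕ)+1 = (j:ℕ) → 0 < Rmat n A i j := by
    intro i j h
    have hne : ¬ (i = j) := fun hh => by rw [hh] at h; omega
    rw [show Rmat n A i j = A i j by simp [Rmat, hne, h]]
    exact (hsup i j (by omega)).1
  have hRnn : ∀ i j : Fin n, 0 ≤ Rmat n A i j := by
    intro i j
    by_cases h1 : i = j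
    · rw [h1]; exact le_of_lt (hRdiag j)
    · by_cases h2 : (i:ℕ)+1 = (j:ℕ)
      · exact le_of_lt (hRsup i j h2)
      · rw [show Rmat n A i j = 0 by simp [Rmat, h1, h2]]
  have hRupper : ∀ i j : Fin n, (j:ℕ) ≠ (i:ℕ) → (i:ℕ) + 1 ≠ (j:ℕ) → Rmat n A i j = 0 := by
    intro i j h1 h2
    have hne : ¬ (i = j) := fun hh => h1 (by rw [hh])
    simp [Rmat, hne, h2]
  -- the minor formula
  have hminor : ∀ (r : ℕ) (rows cols : Fin r → Fin n), StrictMono rows → StrictMono cols →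
      (A.submatrix rows cols).det
        = ∑ g ∈ monoSet r n,
            (∏ k, Lmat n A (rows k) (g k)) * ∏ k, Rmat n A (g k) (cols k) := by
    intro r rows cols hr hc
    have hsub : A.submatrix rows cols
        = ((Lmat n A).submatrix rows id) * ((Rmat n A).submatrix id cols) := by
      ext k l
      rw [Matrix.submatrix_apply, Matrix.mul_apply]
      have hAe : A (rows k) (cols l) = (Lmat n A * Rmat n A) (rows k) (cols l) := by rw [← hLU]
      rw [hAe, Matrix.mul_apply]
      simp [Matrix.submatrix_apply]
    rw [hsub, cauchyBinet]
    refine Finset.sum_congr rfl fun g hg => ?_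
    have hg' : StrictMono g := mem_monoSet.mp hg
    have e1 : ((Lmat n A).submatrix rows id).submatrix id g = (Lmat n A).submatrix rows g := by
      rw [Matrix.submatrix_submatrix]; rfl
    have e2 : ((Rmat n A).submatrix id cols).submatrix g id = (Rmat n A).submatrix g cols := by
      rw [Matrix.submatrix_submatrix]; rfl
    rw [e1, e2, det_submatrix_lowerBidiag (Lmat n A) hLlower rows g hr hg',
      det_submatrix_upperBidiag (Rmat n A) hRupper g cols hg' hc]
  -- nonnegativity of all minors of A
  have hTN : IsTN A := by
    intro r rows cols hr hc
    rw [hminor r rows cols hr hc]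
    refine Finset.sum_nonneg fun g _ => mul_nonneg (Finset.prod_nonneg fun k _ => hLnn _ _)
      (Finset.prod_nonneg fun k _ => hRnn _ _)
  -- positivity of minors admitting a good middle tuple
  have hposminor : ∀ (r : ℕ) (rows cols g : Fin r → Fin n),
      StrictMono rows → StrictMono cols → StrictMono g →
      (∀ k, 0 < Lmat n A (rows k) (g k)) → (∀ k, 0 < Rmat n A (g k) (cols k)) →
      0 < (A.submatrix rows cols).det := by
    intro r rows cols g hr hc hg hL hR
    rw [hminor r rows cols hr hc]
    have hterm : 0 < (∏ k, Lmat n A (rows k) (g k)) * ∏ k, Rmat n A (g k) (cols k) :=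
      mul_pos (Finset.prod_pos fun k _ => hL k) (Finset.prod_pos fun k _ => hR k)
    have hle : (∏ k, Lmat n A (rows k) (g k)) * ∏ k, Rmat n A (g k) (cols k)
        ≤ ∑ g ∈ monoSet r n, (∏ k, Lmat n A (rows k) (g k)) * ∏ k, Rmat n A (g k) (cols k) :=
      Finset.single_le_sum
        (f := fun g : Fin r → Fin n =>
          (∏ k, Lmat n A (rows k) (g k)) * ∏ k, Rmat n A (g k) (cols k))
        (fun g _ => mul_nonneg (Finset.prod_nonneg fun k _ => hLnn _ _)
          (Finset.prod_nonneg fun k _ => hRnn _ _))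
        (mem_monoSet.mpr hg)
    linarith
  have hprincipal : ∀ (r : ℕ) (I : Fin r → Fin n), StrictMono I → 0 < (A.submatrix I I).det := by
    intro r I hI
    exact hposminor r I I I hI hI hI (fun k => by rw [hLdiag]; norm_num) (fun k => hRdiag _)
  -- one-step move lemma
  have hstep : ∀ (r : ℕ) (I J : Fin r → Fin n), StrictMono I → StrictMono J →
      0 < Dd I J → ∃ I' : Fin r → Fin n, StrictMono I' ∧ Dd I' J + 1 = Dd I J ∧
        0 < (A.submatrix I I').det := by
    intro r I J hI hJ hD
    by_cases hex : ∃ t, (I t : ℕ) < (J t : ℕ)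
    · -- move up at the maximal such t
      set S : Finset (Fin r) := Finset.univ.filter (fun t => (I t : ℕ) < (J t : ℕ)) with hS
      have hSne : S.Nonempty := ⟨hex.choose, by
        exact Finset.mem_filter.mpr ⟨Finset.mem_univ _, hex.choose_spec⟩⟩
      set t := S.max' hSne with ht
      have htmem : (I t : ℕ) < (J t : ℕ) := (Finset.mem_filter.mp (S.max'_mem hSne)).2
      have htmax : ∀ s, t < s → ¬ ((I s : ℕ) < (J s : ℕ)) := by
        intro s hs hcon
        exact absurd (S.le_max' s (Finset.mem_filter.mpr ⟨Finset.mem_univ s, hcon⟩))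
          (not_le.mpr hs)
      have hv : (I t : ℕ) + 1 < n := by
        have := (J t).isLt
        omega
      set v : Fin n := ⟨(I t : ℕ)+1, hv⟩ with hvdef
      have hvval : (v : ℕ) = (I t : ℕ) + 1 := rfl
      set I' := Function.update I t v with hI'
      have hI'app : ∀ k, I' k = if k = t then v else I k := fun k => by
        by_cases h : k = t
        · subst h; simp [hI']
        · simp [hI', h]
      have hkey : ∀ b, t < b → (I t : ℕ) + 1 < (I b : ℕ) := by
        intro b hb
        have h1 : (I t : ℕ) < (I b : ℕ) := hI hb
        by_contra hcon
        have h2 := htmax b hb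
        have h3 : (J t : ℕ) < (J b : ℕ) := hJ hb
        omega
      have hI'mono : StrictMono I' := by
        intro a b hab
        have hIv : (I a : ℕ) < (I b : ℕ) := hI hab
        rw [Fin.lt_iff_val_lt_val, hI'app a, hI'app b]
        by_cases ha : a = t <;> by_cases hb : b = t
        · exfalso
          rw [ha, hb] at hab
          exact lt_irrefl _ hab
        · rw [if_pos ha, if_neg hb, hvval]
          exact hkey b (ha ▸ hab)
        · rw [if_neg ha, if_pos hb, hvval]
          have h2 : (I a : ℕ) < (I t : ℕ) := by rw [← hb]; exact hIv
          omega
        · rw [if_neg ha, if_neg hb]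
          exact hIv
      have hDd : Dd I' J + 1 = Dd I J := by
        simp only [Dd]
        rw [← Finset.add_sum_erase _ _ (Finset.mem_univ t),
          ← Finset.add_sum_erase _ _ (Finset.mem_univ t)]
        have hrest : ∑ k ∈ Finset.univ.erase t, ((I' k : ℕ) - (J k : ℕ) + ((J k : ℕ) - (I' k : ℕ)))
            = ∑ k ∈ Finset.univ.erase t, ((I k : ℕ) - (J k : ℕ) + ((J k : ℕ) - (I k : ℕ))) := by
          refine Finset.sum_congr rfl fun k hk => ?_
          have hkt : k ≠ t := Finset.ne_of_mem_erase hk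
          rw [hI'app k, if_neg hkt]
        rw [hrest]
        have h1 : (I' t : ℕ) = (I t : ℕ) + 1 := by rw [hI'app t, if_pos rfl, hvval]
        omega
      refine ⟨I', hI'mono, hDd, ?_⟩
      refine hposminor r I I' I hI hI'mono hI (fun k => by rw [hLdiag]; norm_num) ?_
      intro k
      by_cases hk : k = t
      · rw [hI'app k, if_pos hk, hk]
        exact hRsup (I t) v hvval.symm
      · rw [hI'app k, if_neg hk]
        exact hRdiag _
    · -- move down at the minimal t with J t < I t
      push_neg at hex
      have hex2 : ∃ t, (J t : ℕ) < (I t : ℕ) := by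
        by_contra hcon
        push_neg at hcon
        have : Dd I J = 0 := by
          rw [Dd]
          refine Finset.sum_eq_zero fun k _ => ?_
          have h1 := hex k
          have h2 := hcon k
          omega
        omega
      set S : Finset (Fin r) := Finset.univ.filter (fun t => (J t : ℕ) < (I t : ℕ)) with hS
      have hSne : S.Nonempty := ⟨hex2.choose, by
        exact Finset.mem_filter.mpr ⟨Finset.mem_univ _, hex2.choose_spec⟩⟩
      set t := S.min' hSne with ht
      have htmem : (J t : ℕ) < (I t : ℕ) := (Finset.mem_filter.mp (S.min'_mem hSne)).2
      have htmin : ∀ s, s < t → ¬ ((J s : ℕ) < (I s : ℕ)) := by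
        intro s hs hcon
        exact absurd (S.min'_le s (Finset.mem_filter.mpr ⟨Finset.mem_univ s, hcon⟩))
          (not_le.mpr hs)
      have hv : (I t : ℕ) - 1 < n := by
        have := (I t).isLt
        omega
      set v : Fin n := ⟨(I t : ℕ)-1, hv⟩ with hvdef
      have hvval : (v : ℕ) = (I t : ℕ) - 1 := rfl
      set I' := Function.update I t v with hI'
      have hI'app : ∀ k, I' k = if k = t then v else I k := fun k => by
        by_cases h : k = t
        · subst h; simp [hI']
        · simp [hI', h]
      have hkey : ∀ a, a < t → (I a : ℕ) < (I t : ℕ) - 1 := by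
        intro a ha
        have h1 : (I a : ℕ) < (I t : ℕ) := hI ha
        have h2 := htmin a ha
        have h3 : (J a : ℕ) < (J t : ℕ) := hJ ha
        omega
      have hI'mono : StrictMono I' := by
        intro a b hab
        have hIv : (I a : ℕ) < (I b : ℕ) := hI hab
        rw [Fin.lt_iff_val_lt_val, hI'app a, hI'app b]
        by_cases ha : a = t <;> by_cases hb : b = t
        · exfalso
          rw [ha, hb] at hab
          exact lt_irrefl _ hab
        · rw [if_pos ha, if_neg hb, hvval]
          have h2 : (I t : ℕ) < (I b : ℕ) := by rw [← ha]; exact hIv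
          omega
        · rw [if_neg ha, if_pos hb, hvval]
          exact hkey a (hb ▸ hab)
        · rw [if_neg ha, if_neg hb]
          exact hIv
      have hDd : Dd I' J + 1 = Dd I J := by
        simp only [Dd]
        rw [← Finset.add_sum_erase _ _ (Finset.mem_univ t),
          ← Finset.add_sum_erase _ _ (Finset.mem_univ t)]
        have hrest : ∑ k ∈ Finset.univ.erase t, ((I' k : ℕ) - (J k : ℕ) + ((J k : ℕ) - (I' k : ℕ)))
            = ∑ k ∈ Finset.univ.erase t, ((I k : ℕ) - (J k : ℕ) + ((J k : ℕ) - (I k : ℕ))) := by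
          refine Finset.sum_congr rfl fun k hk => ?_
          have hkt : k ≠ t := Finset.ne_of_mem_erase hk
          rw [hI'app k, if_neg hkt]
        rw [hrest]
        have h1 : (I' t : ℕ) = (I t : ℕ) - 1 := by rw [hI'app t, if_pos rfl, hvval]
        omega
      refine ⟨I', hI'mono, hDd, ?_⟩
      refine hposminor r I I' I' hI hI'mono hI'mono ?_ (fun k => hRdiag _)
      intro k
      by_cases hk : k = t
      · rw [hI'app k, if_pos hk, hk]
        exact hLsub (I t) v (by omega)
      · rw [hI'app k, if_neg hk, hLdiag]
        norm_num
  -- the power lemma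
  have hTNpow : ∀ m : ℕ, ∀ (r : ℕ) (I J : Fin r → Fin n), StrictMono I → StrictMono J →
      (0 ≤ ((A^m).submatrix I J).det ∧ (Dd I J ≤ m → 0 < ((A^m).submatrix I J).det)) := by
    intro m
    induction m with
    | zero =>
      intro r I J hI hJ
      have hone : ((A^0).submatrix I J) = (1 : Matrix (Fin n) (Fin n) ℝ).submatrix I J := by
        rw [pow_zero]
      have hdet : ((1 : Matrix (Fin n) (Fin n) ℝ).submatrix I J).det
          = ∏ k, (1 : Matrix (Fin n) (Fin n) ℝ) (I k) (J k) :=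
        det_submatrix_lowerBidiag _
          (fun i j h1 _ => Matrix.one_apply_ne (fun h => h1 (by rw [h]))) I J hI hJ
      constructor
      · rw [hone, hdet]
        refine Finset.prod_nonneg fun k _ => ?_
        rw [Matrix.one_apply]
        split <;> norm_num
      · intro hD
        have hD0 : Dd I J = 0 := by omega
        have hIJ : ∀ k, I k = J k := by
          intro k
          have := (Finset.sum_eq_zero_iff).mp hD0 k (Finset.mem_univ k)
          exact Fin.ext (by omega)
        rw [hone, hdet]
        refine Finset.prod_pos fun k _ => ?_
        rw [hIJ k, Matrix.one_apply_eq]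
        norm_num
    | succ m ih =>
      intro r I J hI hJ
      have hsplitpow : ((A^(m+1)).submatrix I J)
          = (A.submatrix I id) * ((A^m).submatrix id J) := by
        rw [pow_succ']
        ext k l
        rw [Matrix.submatrix_apply, Matrix.mul_apply, Matrix.mul_apply]
        simp [Matrix.submatrix_apply]
      have hCB : ((A^(m+1)).submatrix I J).det
          = ∑ g ∈ monoSet r n, (A.submatrix I g).det * ((A^m).submatrix g J).det := by
        rw [hsplitpow, cauchyBinet]
        refine Finset.sum_congr rfl fun g hg => ?_
        rw [show (A.submatrix I id).submatrix id g = A.submatrix I g by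
              rw [Matrix.submatrix_submatrix]; rfl,
            show ((A^m).submatrix id J).submatrix g id = (A^m).submatrix g J by
              rw [Matrix.submatrix_submatrix]; rfl]
      have hnn : ∀ g ∈ monoSet r n, 0 ≤ (A.submatrix I g).det * ((A^m).submatrix g J).det := by
        intro g hg
        have hg' := mem_monoSet.mp hg
        exact mul_nonneg (hTN r I g hI hg') ((ih r g J hg' hJ).1)
      constructor
      · rw [hCB]
        exact Finset.sum_nonneg hnn
      · intro hD
        rcases Nat.eq_zero_or_pos (Dd I J) with h0 | hDpos
        · have hIJ : I = J := by
            funext k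
            have := (Finset.sum_eq_zero_iff).mp h0 k (Finset.mem_univ k)
            exact Fin.ext (by omega)
          subst hIJ
          have hDII : Dd I I = 0 := by
            rw [Dd]
            exact Finset.sum_eq_zero fun k _ => by omega
          have hterm : 0 < (A.submatrix I I).det * ((A^m).submatrix I I).det :=
            mul_pos (hprincipal r I hI) ((ih r I I hI hI).2 (by omega))
          have hle := Finset.single_le_sum
            (f := fun g : Fin r → Fin n => (A.submatrix I g).det * ((A^m).submatrix g I).det)
            hnn (mem_monoSet.mpr hI)
          rw [hCB]
          exact lt_of_lt_of_le hterm hle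
        · obtain ⟨I', hI'm, hDd, hpos⟩ := hstep r I J hI hJ hDpos
          have hterm : 0 < (A.submatrix I I').det * ((A^m).submatrix I' J).det :=
            mul_pos hpos ((ih r I' J hI'm hJ).2 (by omega))
          have hle := Finset.single_le_sum
            (f := fun g : Fin r → Fin n => (A.submatrix I g).det * ((A^m).submatrix g J).det)
            hnn (mem_monoSet.mpr hI'm)
          rw [hCB]
          exact lt_of_lt_of_le hterm hle
  refine ⟨hTN, n*n+1, Nat.succ_pos _, ?_⟩
  intro r I J hI hJ
  have hr : r ≤ n := by
    have := Fintype.card_le_of_injective I hI.injective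
    simpa using this
  have hDb : Dd I J ≤ n*n+1 := by
    have h1 : ∀ k : Fin r, ((I k : ℕ) - (J k : ℕ) + ((J k : ℕ) - (I k : ℕ))) ≤ n := by
      intro k
      have := (I k).isLt
      have := (J k).isLt
      omega
    calc Dd I J ≤ ∑ _k : Fin r, n := Finset.sum_le_sum fun k _ => h1 k
      _ = r * n := by simp [Finset.sum_const, smul_eq_mul]
      _ ≤ n*n+1 := by nlinarith
  exact (hTNpow (n*n+1) r I J hI hJ).2 hDb

theorem stmt9 (n : ℕ) (Ω : Set (Fin n → ℝ)) (hΩc : IsCompact Ω) (hΩconv : Convex ℝ Ω)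
    (f : ℕ → (Fin n → ℝ) → (Fin n → ℝ)) (hf : ∀ k, ContDiff ℝ 1 (f k))
    (hinv : ∀ ε : ℝ, 0 < ε → ∀ k, ∀ a ∈ Ω, a + ε • f k a ∈ Ω)
    (M : ℝ) (hbnd : ∀ k, ∀ a ∈ Ω, ∀ i j : Fin n, |jac (f k) a i j| ≤ M)
    (htri : ∀ k, ∀ a ∈ Ω, ∀ i j : Fin n,
      ((i : ℕ) + 2 ≤ (j : ℕ) ∨ (j : ℕ) + 2 ≤ (i : ℕ)) → jac (f k) a i j = 0)
    (c : ℝ) (hc : 0 < c)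
    (hoff : ∀ k, ∀ a ∈ Ω, ∀ i j : Fin n, (j : ℕ) = (i : ℕ) + 1 →
      c ≤ jac (f k) a i j ∧ c ≤ jac (f k) a j i) :
    ∃ ε₀ > (0:ℝ), ∀ ε : ℝ, 0 < ε → ε < ε₀ → ∀ k, ∀ a ∈ Ω, ∀ b ∈ Ω,
      IsOsc (Matrix.of fun i j =>
        ∫ r in (0:ℝ)..1,
          ((1 : Matrix (Fin n) (Fin n) ℝ) + ε • jac (f k) (r • a + (1 - r) • b)) i j) := by
  set M₁ : ℝ := max M 1 with hM₁
  have hM₁pos : (0:ℝ) < M₁ := lt_of_lt_of_le one_pos (le_max_right M 1)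
  have hMM₁ : M ≤ M₁ := le_max_left M 1
  refine ⟨1/(4*M₁), by positivity, ?_⟩
  intro ε hε hεlt k a ha b hb
  have hεM : ε * M₁ < 1/4 := by
    rw [lt_div_iff₀ (by positivity)] at hεlt
    nlinarith
  -- the path
  have hγΩ : ∀ r ∈ Set.Icc (0:ℝ) 1, r • a + (1 - r) • b ∈ Ω := fun r hr =>
    hΩconv ha hb hr.1 (by linarith [hr.2]) (by ring)
  -- continuity of the integrand
  have hjcont : ∀ i j : Fin n, Continuous (fun r : ℝ => jac (f k) (r • a + (1 - r) • b) i j) := by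
    intro i j
    have hγcont : Continuous (fun r : ℝ => r • a + (1 - r) • b) := by
      exact (continuous_id.smul continuous_const).add
        ((continuous_const.sub continuous_id).smul continuous_const)
    have h1 : Continuous (fun x : Fin n → ℝ => fderiv ℝ (f k) x) :=
      (hf k).continuous_fderiv one_ne_zero
    have h2 : Continuous (fun x : Fin n → ℝ => fderiv ℝ (f k) x (Pi.single j 1)) :=
      h1.clm_apply continuous_const
    exact ((continuous_apply i).comp h2).comp hγcont
  have hint : ∀ i j : Fin n,
      IntervalIntegrable (fun r : ℝ => jac (f k) (r • a + (1 - r) • b) i j)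
        MeasureTheory.volume 0 1 :=
    fun i j => (hjcont i j).intervalIntegrable 0 1
  -- entries
  have hFentry : ∀ i j : Fin n,
      (Matrix.of fun i j => ∫ r in (0:ℝ)..1,
        ((1 : Matrix (Fin n) (Fin n) ℝ) + ε • jac (f k) (r • a + (1 - r) • b)) i j) i j
      = (if i = j then (1:ℝ) else 0)
        + ε * ∫ r in (0:ℝ)..1, jac (f k) (r • a + (1 - r) • b) i j := by
    intro i j
    rw [Matrix.of_apply]
    have heq : (fun r : ℝ => ((1 : Matrix (Fin n) (Fin n) ℝ)
          + ε • jac (f k) (r • a + (1 - r) • b)) i j)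
        = fun r : ℝ => (if i = j then (1:ℝ) else 0)
            + ε * jac (f k) (r • a + (1 - r) • b) i j := by
      funext r
      simp [Matrix.add_apply, Matrix.smul_apply, Matrix.one_apply, smul_eq_mul]
    rw [heq, intervalIntegral.integral_add intervalIntegrable_const ((hint i j).const_mul ε),
      intervalIntegral.integral_const, intervalIntegral.integral_const_mul]
    simp
  -- bounds on the integrals
  have hGbnd : ∀ i j : Fin n,
      |∫ r in (0:ℝ)..1, jac (f k) (r • a + (1 - r) • b) i j| ≤ M := by
    intro i j
    have h := intervalIntegral.norm_integral_le_of_norm_le_const (C := M)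
      (f := fun r : ℝ => jac (f k) (r • a + (1 - r) • b) i j) (a := 0) (b := 1) ?_
    · simpa [Real.norm_eq_abs] using h
    · intro r hr
      rw [Set.uIoc_of_le (by norm_num : (0:ℝ) ≤ 1)] at hr
      have hrΩ := hγΩ r ⟨le_of_lt hr.1, hr.2⟩
      simpa [Real.norm_eq_abs] using hbnd k _ hrΩ i j
  have hGlow : ∀ i j : Fin n, (j:ℕ) = (i:ℕ)+1 →
      c ≤ (∫ r in (0:ℝ)..1, jac (f k) (r • a + (1 - r) • b) i j)
      ∧ c ≤ (∫ r in (0:ℝ)..1, jac (f k) (r • a + (1 - r) • b) j i) := by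
    intro i j hij
    constructor
    · have h := intervalIntegral.integral_mono_on (by norm_num : (0:ℝ) ≤ 1)
        intervalIntegrable_const (hint i j)
        (fun r hr => (hoff k _ (hγΩ r hr) i j hij).1)
      simpa using h
    · have h := intervalIntegral.integral_mono_on (by norm_num : (0:ℝ) ≤ 1)
        intervalIntegrable_const (hint j i)
        (fun r hr => (hoff k _ (hγΩ r hr) i j hij).2)
      simpa using h
  have hGzero : ∀ i j : Fin n, ((i:ℕ)+2 ≤ (j:ℕ) ∨ (j:ℕ)+2 ≤ (i:ℕ)) →
      (∫ r in (0:ℝ)..1, jac (f k) (r • a + (1 - r) • b) i j) = 0 := by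
    intro i j hij
    have heqon : Set.EqOn (fun r : ℝ => jac (f k) (r • a + (1 - r) • b) i j) 0
        (Set.uIcc (0:ℝ) 1) := by
      intro r hr
      rw [Set.uIcc_of_le (by norm_num : (0:ℝ) ≤ 1)] at hr
      exact htri k _ (hγΩ r hr) i j hij
    rw [intervalIntegral.integral_congr heqon]
    simp
  -- apply the oscillation theorem
  apply isOsc_of_tridiag
  · intro i
    rw [hFentry i i, if_pos rfl]
    have h1 := (abs_le.mp (hGbnd i i)).1
    have h2 := mul_le_mul_of_nonneg_left (le_trans (neg_le_neg hMM₁) h1) hε.le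
    nlinarith
  · intro i j hij
    have hne : ¬ (i = j) := fun h => by rw [h] at hij; omega
    have hne' : ¬ (j = i) := fun h => hne h.symm
    have hlow := hGlow i j hij
    constructor
    · rw [hFentry i j, if_neg hne, zero_add]
      exact mul_pos hε (lt_of_lt_of_le hc hlow.1)
    · rw [hFentry j i, if_neg hne', zero_add]
      exact mul_pos hε (lt_of_lt_of_le hc hlow.2)
  · intro i j hij
    have hne : ¬ (i = j) := fun h => by rw [h] at hij; omega
    rw [hFentry i j, if_neg hne, hGzero i j hij, mul_zero, zero_add]
  · intro i j hij
    have hne : ¬ (i = j) := fun h => by rw [h] at hij; omega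
    have hne' : ¬ (j = i) := fun h => hne h.symm
    rw [hFentry i j, if_neg hne, hFentry j i, if_neg hne', zero_add, zero_add]
    have hlow := hGlow i j hij
    have hub1 := (abs_le.mp (hGbnd i j)).2
    have hub2 := (abs_le.mp (hGbnd j i)).2
    have hnn1 : 0 ≤ ∫ r in (0:ℝ)..1, jac (f k) (r • a + (1 - r) • b) i j :=
      le_trans hc.le hlow.1
    have hnn2 : 0 ≤ ∫ r in (0:ℝ)..1, jac (f k) (r • a + (1 - r) • b) j i :=
      le_trans hc.le hlow.2
    have h1 : ε * (∫ r in (0:ℝ)..1, jac (f k) (r • a + (1 - r) • b) i j) ≤ ε * M₁ :=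
      mul_le_mul_of_nonneg_left (hub1.trans hMM₁) hε.le
    have h2 : ε * (∫ r in (0:ℝ)..1, jac (f k) (r • a + (1 - r) • b) j i) ≤ ε * M₁ :=
      mul_le_mul_of_nonneg_left (hub2.trans hMM₁) hε.le
    have h3 : 0 ≤ ε * (∫ r in (0:ℝ)..1, jac (f k) (r • a + (1 - r) • b) j i) :=
      mul_nonneg hε.le hnn2
    have h5 : 0 ≤ ε * M₁ := mul_nonneg hε.le hM₁pos.le
    have h6 := mul_le_mul h1 h2 h3 h5
    nlinarith [h6, hεM, h5]
end

section
/- Consider the time-invariant system x(k+1) = f(x(k)), where f : ℝⁿ → ℝⁿ is C¹ with Jacobian J(x) := (∂f/∂x)(x), and whose trajectories evolve on a compact convex invariant set Ω ⊂ ℝⁿ. If F(a,b) := ∫₀¹ J(ra + (1−r)b) dr is TP for all a, b ∈ Ω, then every solution emanating from Ω converges to an equilibrium point, i.e., for every a ∈ Ω there exists e ∈ Ω with f(e) = e such that x(k,a) → e as k → ∞. -/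
open Matrix MeasureTheory Filter Topology

namespace TPproof

variable {n N : ℕ}

/-- A strictly alternating chain of nonzero entries of `z` at positions `j 0 < ⋯ < j p`. -/
def AltOn (z : Fin n → ℝ) (p : ℕ) (j : ℕ → Fin n) : Prop :=
  (∀ q q', q < q' → q' ≤ p → j q < j q') ∧ (∀ q ≤ p, z (j q) ≠ 0) ∧
    (∀ q < p, z (j q) * z (j (q + 1)) < 0)

/-- The number of sign variations of `z`. -/
noncomputable def sm (z : Fin n → ℝ) : ℕ := sSup {p | ∃ j, AltOn z p j}

/-- The "block index" of a position `i`. -/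
noncomputable def phi (z : Fin n → ℝ) (i : Fin n) : ℕ :=
  sSup {p | ∃ j, AltOn z p j ∧ j p = i}

theorem altOn_lt {z : Fin n → ℝ} {p : ℕ} {j : ℕ → Fin n} (h : AltOn z p j) : p < n := by
  have hinj : Function.Injective (fun q : Fin (p + 1) => j q.val) := by
    have hsm : StrictMono (fun q : Fin (p + 1) => j q.val) := by
      intro q q' hlt
      exact h.1 q.val q'.val hlt (Nat.lt_succ_iff.mp q'.isLt)
    exact hsm.injective
  have := Fintype.card_le_of_injective _ hinj
  simpa using this

theorem bddAbove_chains (z : Fin n → ℝ) : BddAbove {p | ∃ j, AltOn z p j} := by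
  refine ⟨n, fun p hp => ?_⟩
  obtain ⟨j, hj⟩ := hp
  exact (altOn_lt hj).le

theorem altOn_le_sm {z : Fin n → ℝ} {p : ℕ} {j : ℕ → Fin n} (h : AltOn z p j) : p ≤ sm z :=
  le_csSup (bddAbove_chains z) ⟨j, h⟩

theorem altOn_single {z : Fin n → ℝ} {i : Fin n} (hzi : z i ≠ 0) :
    AltOn z 0 (fun _ => i) := by
  refine ⟨fun q q' h1 h2 => by omega, fun q _ => hzi, fun q hq => by omega⟩

theorem exists_sm_chain {z : Fin n → ℝ} (hz : z ≠ 0) : ∃ j, AltOn z (sm z) j := by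
  have hne : {p | ∃ j, AltOn z p j}.Nonempty := by
    obtain ⟨i, hi⟩ := Function.ne_iff.mp hz
    exact ⟨0, fun _ => i, altOn_single hi⟩
  exact Nat.sSup_mem hne (bddAbove_chains z)

theorem altOn_mono {z : Fin n → ℝ} {p : ℕ} {j : ℕ → Fin n} (h : AltOn z p j)
    {p' : ℕ} (hp : p' ≤ p) : AltOn z p' j :=
  ⟨fun q q' h1 h2 => h.1 q q' h1 (h2.trans hp),
   fun q hq => h.2.1 q (hq.trans hp), fun q hq => h.2.2 q (by omega)⟩

theorem le_phi {z : Fin n → ℝ} {i : Fin n} {p : ℕ} {j : ℕ → Fin n}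
    (h : AltOn z p j) (he : j p = i) : p ≤ phi z i := by
  have hb : BddAbove {p | ∃ j, AltOn z p j ∧ j p = i} := by
    refine ⟨n, fun p hp => ?_⟩
    obtain ⟨j, hj, _⟩ := hp
    exact (altOn_lt hj).le
  exact le_csSup hb ⟨j, h, he⟩

theorem exists_phi_chain {z : Fin n → ℝ} {i : Fin n} (hzi : z i ≠ 0) :
    ∃ j, AltOn z (phi z i) j ∧ j (phi z i) = i := by
  have hne : {p | ∃ j, AltOn z p j ∧ j p = i}.Nonempty :=
    ⟨0, fun _ => i, altOn_single hzi, rfl⟩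
  have hb : BddAbove {p | ∃ j, AltOn z p j ∧ j p = i} := by
    refine ⟨n, fun p hp => ?_⟩
    obtain ⟨j, hj, _⟩ := hp
    exact (altOn_lt hj).le
  exact Nat.sSup_mem hne hb

theorem phi_le_sm {z : Fin n → ℝ} {i : Fin n} (hzi : z i ≠ 0) : phi z i ≤ sm z := by
  obtain ⟨j, hj, _⟩ := exists_phi_chain hzi
  exact altOn_le_sm hj


theorem mul_neg_right_ne {a b : ℝ} (h : a * b < 0) : b ≠ 0 := by
  intro h0; rw [h0, mul_zero] at h; exact lt_irrefl 0 h

theorem mul_neg_left_ne {a b : ℝ} (h : a * b < 0) : a ≠ 0 := by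
  intro h0; rw [h0, zero_mul] at h; exact lt_irrefl 0 h

theorem altOn_snoc {z : Fin n → ℝ} {p : ℕ} {j : ℕ → Fin n} (h : AltOn z p j)
    {i' : Fin n} (hlt : j p < i') (hs : z (j p) * z i' < 0) :
    AltOn z (p + 1) (Function.update j (p + 1) i') := by
  have hi' : z i' ≠ 0 := mul_neg_right_ne hs
  have hupd : ∀ q, q ≤ p → Function.update j (p + 1) i' q = j q := fun q hq =>
    Function.update_of_ne (by omega) _ _
  have hle : ∀ q, q ≤ p → j q ≤ j p := by
    intro q hq
    rcases eq_or_lt_of_le hq with h' | h'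
    · rw [h']
    · exact (h.1 q p h' le_rfl).le
  refine ⟨?_, ?_, ?_⟩
  · intro q q' h1 h2
    by_cases hq' : q' = p + 1
    · rw [hq', Function.update_self, hupd q (by omega)]
      exact lt_of_le_of_lt (hle q (by omega)) hlt
    · rw [hupd q (by omega), hupd q' (by omega)]
      exact h.1 q q' h1 (by omega)
  · intro q hq
    by_cases hq' : q = p + 1
    · rw [hq', Function.update_self]; exact hi'
    · rw [hupd q (by omega)]; exact h.2.1 q (by omega)
  · intro q hq
    by_cases hq' : q = p
    · rw [hq', hupd p le_rfl, Function.update_self]; exact hs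
    · rw [hupd q (by omega), hupd (q + 1) (by omega)]
      exact h.2.2 q (by omega)

theorem altOn_update_last {z : Fin n → ℝ} {p : ℕ} {j : ℕ → Fin n} (h : AltOn z p j)
    {i' : Fin n} (hlt : ∀ q < p, j q < i') (hne : z i' ≠ 0)
    (hs : ∀ q, q + 1 = p → z (j q) * z i' < 0) :
    AltOn z p (Function.update j p i') := by
  have hupd : ∀ q, q < p → Function.update j p i' q = j q := fun q hq =>
    Function.update_of_ne (by omega) _ _
  refine ⟨?_, ?_, ?_⟩
  · intro q q' h1 h2
    by_cases hq' : q' = p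
    · rw [hq', Function.update_self, hupd q (by omega)]
      exact hlt q (by omega)
    · rw [hupd q (by omega), hupd q' (by omega)]
      exact h.1 q q' h1 h2
  · intro q hq
    by_cases hq' : q = p
    · rw [hq', Function.update_self]; exact hne
    · rw [hupd q (by omega)]; exact h.2.1 q (by omega)
  · intro q hq
    by_cases hq' : q + 1 = p
    · rw [hq', Function.update_self, hupd q (by omega)]
      exact hs q hq'
    · rw [hupd q (by omega), hupd (q + 1) (by omega)]
      exact h.2.2 q hq

theorem altOn_cons {z : Fin n → ℝ} {p : ℕ} {j : ℕ → Fin n} (h : AltOn z p j)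
    {i' : Fin n} (hlt : i' < j 0) (hs : z i' * z (j 0) < 0) :
    AltOn z (p + 1) (fun q => if q = 0 then i' else j (q - 1)) := by
  have hi' : z i' ≠ 0 := mul_neg_left_ne hs
  refine ⟨?_, ?_, ?_⟩
  · intro q q' h1 h2
    by_cases hq : q = 0
    · simp only [hq, if_pos rfl, if_neg (by omega : q' ≠ 0)]
      rcases Nat.eq_zero_or_pos (q' - 1) with h' | h'
      · rw [h']; exact hlt
      · exact lt_trans hlt (h.1 0 (q' - 1) h' (by omega))
    · simp only [if_neg hq, if_neg (by omega : q' ≠ 0)]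
      exact h.1 (q - 1) (q' - 1) (by omega) (by omega)
  · intro q hq
    by_cases hq0 : q = 0
    · simp only [hq0, if_pos rfl]; exact hi'
    · simp only [if_neg hq0]; exact h.2.1 (q - 1) (by omega)
  · intro q hq
    by_cases hq0 : q = 0
    · simp only [hq0, if_pos rfl, if_neg (by omega : ¬(0 + 1 = 0))]
      simpa using hs
    · simp only [if_neg hq0, if_neg (by omega : ¬(q + 1 = 0))]
      have : q - 1 + 1 = q + 1 - 1 := by omega
      have h2 := h.2.2 (q - 1) (by omega)
      rw [(by omega : q - 1 + 1 = q)] at h2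
      rw [(by omega : q + 1 - 1 = q)]
      exact h2
  -- note: h0le unused? maybe
theorem altOn_sign {z : Fin n → ℝ} {p : ℕ} {j : ℕ → Fin n} (h : AltOn z p j)
    {σ : ℝ} (hσ : σ = 1 ∨ σ = -1) (h0 : 0 < σ * z (j 0)) :
    ∀ q, q ≤ p → 0 < σ * (-1) ^ q * z (j q) := by
  intro q
  induction q with
  | zero => intro _; simpa using h0
  | succ t ih =>
    intro hq
    have h1 := ih (by omega)
    have h2 := h.2.2 t (by omega)
    have hsq : σ * σ = 1 := by rcases hσ with h | h <;> rw [h] <;> ring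
    rw [pow_succ]
    nlinarith [sq_nonneg (z (j t)), sq_nonneg (σ * (-1) ^ t)]
theorem sign_trans1 {a b c : ℝ} (h1 : a * b < 0) (h2 : 0 < b * c) : a * c < 0 := by
  rcases lt_trichotomy b 0 with hb | hb | hb
  · have ha : 0 < a := by nlinarith
    have hc : c < 0 := by nlinarith
    exact mul_neg_of_pos_of_neg ha hc
  · rw [hb, mul_zero] at h1; exact absurd h1 (lt_irrefl 0)
  · have ha : a < 0 := by nlinarith
    have hc : 0 < c := by nlinarith
    exact mul_neg_of_neg_of_pos ha hc

theorem sign_trans2 {a b c : ℝ} (h1 : a * b < 0) (h2 : c * b < 0) : 0 < a * c := by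
  rcases lt_trichotomy b 0 with hb | hb | hb
  · have ha : 0 < a := by nlinarith
    have hc : 0 < c := by nlinarith
    exact mul_pos ha hc
  · rw [hb, mul_zero] at h1; exact absurd h1 (lt_irrefl 0)
  · have ha : a < 0 := by nlinarith
    have hc : c < 0 := by nlinarith
    exact mul_pos_of_neg_of_neg ha hc

theorem sign_trans3 {a b c : ℝ} (h1 : 0 < a * b) (h2 : 0 < b * c) : 0 < a * c := by
  rcases lt_trichotomy b 0 with hb | hb | hb
  · have ha : a < 0 := by nlinarith
    have hc : c < 0 := by nlinarith
    exact mul_pos_of_neg_of_neg ha hc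
  · rw [hb, mul_zero] at h1; exact absurd h1 (lt_irrefl 0)
  · have ha : 0 < a := by nlinarith
    have hc : 0 < c := by nlinarith
    exact mul_pos ha hc

theorem phi_eq_zero_of_first {z : Fin n → ℝ} {i : Fin n} (hzi : z i ≠ 0)
    (hzero : ∀ t, t < i → z t = 0) : phi z i = 0 := by
  have hne : {p | ∃ j, AltOn z p j ∧ j p = i}.Nonempty :=
    ⟨0, fun _ => i, altOn_single hzi, rfl⟩
  refine Nat.le_zero.mp (csSup_le hne ?_)
  rintro p ⟨j, hj, hend⟩
  by_contra hp
  have h0 : j 0 < i := by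
    have := hj.1 0 p (by omega) le_rfl; rwa [hend] at this
  exact hj.2.1 0 (by omega) (hzero _ h0)

theorem phi_mono {z : Fin n → ℝ} {i i' : Fin n} (hzi : z i ≠ 0) (hzi' : z i' ≠ 0)
    (hlt : i < i') : phi z i ≤ phi z i' := by
  obtain ⟨j, hj, hend⟩ := exists_phi_chain hzi
  rcases lt_or_gt_of_ne (mul_ne_zero hzi hzi') with hs | hs
  · have h1 := altOn_snoc hj (by rw [hend]; exact hlt) (by rw [hend]; exact hs)
    have := le_phi h1 (Function.update_self _ _ _)
    omega
  · have h1 := altOn_update_last hj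
      (fun q hq => lt_trans (by have := hj.1 q (phi z i) hq le_rfl; rwa [hend] at this) hlt)
      hzi'
      (fun q hq => by
        have h2 := hj.2.2 q (by omega)
        rw [(by omega : q + 1 = phi z i), hend] at h2
        exact sign_trans1 h2 hs)
    exact le_phi h1 (Function.update_self _ _ _)

theorem struct {z : Fin n → ℝ} (hz : z ≠ 0) :
    ∃ ε₀ : ℝ, (ε₀ = 1 ∨ ε₀ = -1) ∧
      (∀ i i', z i ≠ 0 → z i' ≠ 0 → i < i' → phi z i ≤ phi z i') ∧
      (∀ i, z i ≠ 0 → 0 < z i * (ε₀ * (-1) ^ phi z i)) ∧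
      (∀ p, p ≤ sm z → ∃ i, z i ≠ 0 ∧ phi z i = p) ∧
      (∀ i, z i ≠ 0 → (∀ t, t < i → z t = 0) → 0 < z i * ε₀) := by
  classical
  have hsuppne : (Finset.univ.filter (fun i => z i ≠ 0)).Nonempty := by
    obtain ⟨i, hi⟩ := Function.ne_iff.mp hz
    simp only [Pi.zero_apply] at hi
    exact ⟨i, by simp [hi]⟩
  set i₀ : Fin n := (Finset.univ.filter (fun i => z i ≠ 0)).min' hsuppne with hi₀def
  have hi₀mem := (Finset.univ.filter (fun i => z i ≠ 0)).min'_mem hsuppne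
  have hzi₀ : z i₀ ≠ 0 := by simpa using hi₀mem
  set ε₀ : ℝ := if 0 < z i₀ then 1 else -1 with hε₀def
  have hε : ε₀ = 1 ∨ ε₀ = -1 := by
    by_cases h : 0 < z i₀
    · left; simp [hε₀def, h]
    · right; simp [hε₀def, h]
  have hfirstA : ∀ i : Fin n, z i ≠ 0 → (∀ t, t < i → z t = 0) → i = i₀ := by
    intro i hzi hzero
    have h1 : i₀ ≤ i := Finset.min'_le _ _ (by simp [hzi])
    rcases eq_or_lt_of_le h1 with h | h
    · exact h.symm
    · exact absurd (hzero _ h) hzi₀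
  have hfirstsign : ∀ i : Fin n, z i ≠ 0 → (∀ t, t < i → z t = 0) → 0 < z i * ε₀ := by
    intro i hzi hzero
    rw [hfirstA i hzi hzero]
    by_cases h : 0 < z i₀
    · simp [hε₀def, h]
    · have : z i₀ < 0 := lt_of_le_of_ne (not_lt.mp h) hzi₀
      simp only [hε₀def, if_neg h]
      nlinarith
  have main : ∀ m : ℕ, ∀ i : Fin n, i.val ≤ m → z i ≠ 0 →
      (0 < z i * (ε₀ * (-1) ^ phi z i)) ∧
      (∀ p, p ≤ phi z i → ∃ i', z i' ≠ 0 ∧ phi z i' = p) := by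
    intro m
    induction m with
    | zero =>
      intro i hi hzi
      have hzero : ∀ t, t < i → z t = 0 := by
        intro t ht
        exact absurd (Fin.lt_def.mp ht) (by omega)
      have hphi := phi_eq_zero_of_first hzi hzero
      constructor
      · rw [hphi, pow_zero, mul_one]
        exact hfirstsign i hzi hzero
      · intro p hp
        rw [hphi] at hp
        exact ⟨i, hzi, by omega⟩
    | succ m ih =>
      intro i hi hzi
      by_cases hAcase : ∀ t, t < i → z t = 0
      · have hphi := phi_eq_zero_of_first hzi hAcase
        constructor
        · rw [hphi, pow_zero, mul_one]
          exact hfirstsign i hzi hAcase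
        · intro p hp
          rw [hphi] at hp
          exact ⟨i, hzi, by omega⟩
      · push_neg at hAcase
        obtain ⟨t0, ht0lt, ht0ne⟩ := hAcase
        have hTne : ((Finset.univ.filter (fun u => z u ≠ 0 ∧ u < i))).Nonempty :=
          ⟨t0, by simp [ht0ne, ht0lt]⟩
        set i' : Fin n := ((Finset.univ.filter (fun u => z u ≠ 0 ∧ u < i))).max' hTne with hi'def
        have hi'mem := ((Finset.univ.filter (fun u => z u ≠ 0 ∧ u < i))).max'_mem hTne
        have hzi' : z i' ≠ 0 := by simpa using (Finset.mem_filter.mp hi'mem).2.1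
        have hi'lt : i' < i := (Finset.mem_filter.mp hi'mem).2.2
        have hble : ∀ b : Fin n, z b ≠ 0 → b < i → b ≤ i' := by
          intro b hb1 hb2
          exact Finset.le_max' _ _ (by simp [hb1, hb2])
        obtain ⟨hsign', hsurj'⟩ := ih i' (by
          have := Fin.lt_def.mp hi'lt; omega) hzi'
        obtain ⟨j, hj, hend⟩ := exists_phi_chain hzi
        obtain ⟨j', hj', hend'⟩ := exists_phi_chain hzi'
        rcases lt_or_gt_of_ne (mul_ne_zero hzi' hzi) with hflip | hsame
        · -- z i' * z i < 0 : phi z i = phi z i' + 1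
          have hge : phi z i' + 1 ≤ phi z i := by
            have h1 := altOn_snoc hj' (by rw [hend']; exact hi'lt) (by rw [hend']; exact hflip)
            exact le_phi h1 (Function.update_self _ _ _)
          have hle : phi z i ≤ phi z i' + 1 := by
            have hppos : 0 < phi z i := by omega
            have hb_lt : j (phi z i - 1) < i := by
              have := hj.1 (phi z i - 1) (phi z i) (by omega) le_rfl
              rwa [hend] at this
            have hbz : z (j (phi z i - 1)) ≠ 0 := hj.2.1 _ (by omega)
            have halt : z (j (phi z i - 1)) * z i < 0 := by
              have h2 := hj.2.2 (phi z i - 1) (by omega)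
              rwa [(by omega : phi z i - 1 + 1 = phi z i), hend] at h2
            have hble' : j (phi z i - 1) ≤ i' := hble _ hbz hb_lt
            rcases eq_or_lt_of_le hble' with hbe | hbl
            · have := le_phi (altOn_mono hj (by omega : phi z i - 1 ≤ phi z i)) hbe
              omega
            · have hbi' : 0 < z (j (phi z i - 1)) * z i' := sign_trans2 halt hflip
              -- replace last entry of the truncated chain by i'
              have h1 := altOn_update_last (altOn_mono hj (by omega : phi z i - 1 ≤ phi z i))
                (fun q hq => lt_trans (hj.1 q (phi z i - 1) hq (by omega)) hbl)
                hzi'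
                (fun q hq => by
                  have h2 := hj.2.2 q (by omega)
                  rw [(by omega : q + 1 = phi z i - 1)] at h2
                  exact sign_trans1 h2 hbi')
              have := le_phi h1 (Function.update_self _ _ _)
              omega
          have hpp : phi z i = phi z i' + 1 := le_antisymm hle hge
          constructor
          · rw [hpp, pow_succ]
            have h3 : z i * (ε₀ * (-1) ^ phi z i') < 0 := by
              have := sign_trans1 (a := z i) (b := z i') (c := ε₀ * (-1) ^ phi z i')
                (by rw [mul_comm] at hflip; exact hflip) hsign'
              exact this
            nlinarith
          · intro p hp
            rcases eq_or_lt_of_le hp with h | h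
            · exact ⟨i, hzi, h.symm⟩
            · exact hsurj' p (by omega)
        · -- 0 < z i' * z i : phi z i = phi z i'
          have hge : phi z i' ≤ phi z i := phi_mono hzi' hzi hi'lt
          have hle : phi z i ≤ phi z i' := by
            rcases Nat.eq_zero_or_pos (phi z i) with h0 | hppos
            · omega
            · have hb_lt : j (phi z i - 1) < i := by
                have := hj.1 (phi z i - 1) (phi z i) (by omega) le_rfl
                rwa [hend] at this
              have hbz : z (j (phi z i - 1)) ≠ 0 := hj.2.1 _ (by omega)
              have halt : z (j (phi z i - 1)) * z i < 0 := by
                have h2 := hj.2.2 (phi z i - 1) (by omega)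
                rwa [(by omega : phi z i - 1 + 1 = phi z i), hend] at h2
              have hble' : j (phi z i - 1) ≤ i' := hble _ hbz hb_lt
              have hbne : j (phi z i - 1) ≠ i' := by
                intro hbe
                rw [hbe] at halt
                linarith
              have hbl : j (phi z i - 1) < i' := lt_of_le_of_ne hble' hbne
              have hbi' : z (j (phi z i - 1)) * z i' < 0 :=
                sign_trans1 halt (by rw [mul_comm] at hsame; exact hsame)
              have h1 := altOn_update_last hj
                (fun q hq => by
                  rcases eq_or_lt_of_le (by omega : q ≤ phi z i - 1) with h' | h'
                  · rw [h']; exact hbl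
                  · exact lt_trans (hj.1 q (phi z i - 1) h' (by omega)) hbl)
                hzi'
                (fun q hq => by
                  rw [(by omega : q = phi z i - 1)]
                  exact hbi')
              exact le_phi h1 (Function.update_self _ _ _)
          have hpp : phi z i = phi z i' := le_antisymm hle hge
          constructor
          · rw [hpp]
            exact sign_trans3 (by rw [mul_comm] at hsame; exact hsame) hsign'
          · intro p hp
            rcases eq_or_lt_of_le hp with h | h
            · exact ⟨i, hzi, h.symm⟩
            · exact hsurj' p (by omega)
  refine ⟨ε₀, hε, fun i i' hzi hzi' h => phi_mono hzi hzi' h,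
    fun i hzi => (main i.val i le_rfl hzi).1, ?_, hfirstsign⟩
  obtain ⟨j, hj⟩ := exists_sm_chain hz
  have hze : z (j (sm z)) ≠ 0 := hj.2.1 _ le_rfl
  have hphie : phi z (j (sm z)) = sm z :=
    le_antisymm (phi_le_sm hze) (le_phi hj rfl)
  intro p hp
  exact (main (j (sm z)).val _ le_rfl hze).2 p (by omega)

theorem blocks_det_pos {N n s r : ℕ} (A : Matrix (Fin N) (Fin n) ℝ) (hA : IsTP A)
    (J : Fin (s + 1) → Finset (Fin n)) (c : Fin n → ℝ)
    (hne : ∀ p, (J p).Nonempty) (hc : ∀ p, ∀ j ∈ J p, 0 < c j)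
    (hsep : ∀ p p' : Fin (s + 1), p < p' → ∀ j ∈ J p, ∀ j' ∈ J p', j < j')
    (rows : Fin r → Fin N) (cols : Fin r → Fin (s + 1))
    (hrows : StrictMono rows) (hcols : StrictMono cols) :
    0 < (Matrix.of fun t u => ∑ j ∈ J (cols u), A (rows t) j * c j :
        Matrix (Fin r) (Fin r) ℝ).det := by
  classical
  rw [← Matrix.det_transpose]
  have hrow : (Matrix.of fun t u => ∑ j ∈ J (cols u), A (rows t) j * c j :
      Matrix (Fin r) (Fin r) ℝ)ᵀ
      = fun u => ∑ j ∈ J (cols u), c j • (fun t => A (rows t) j) := by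
    funext u t
    simp [Matrix.transpose_apply, Finset.sum_apply, mul_comm]
  have hdet : ((Matrix.of fun t u => ∑ j ∈ J (cols u), A (rows t) j * c j :
      Matrix (Fin r) (Fin r) ℝ)ᵀ).det
      = (Matrix.detRowAlternating (R := ℝ) (n := Fin r)).toMultilinearMap
          (fun u => ∑ j ∈ J (cols u), c j • (fun t => A (rows t) j)) := by
    rw [← hrow]; rfl
  rw [hdet]
  rw [MultilinearMap.map_sum_finset]
  apply Finset.sum_pos
  · intro g hg
    have hgmem : ∀ u, g u ∈ J (cols u) := by
      intro u
      exact Fintype.mem_piFinset.mp hg u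
    have hterm : (Matrix.detRowAlternating (R := ℝ) (n := Fin r)).toMultilinearMap
        (fun u => c (g u) • (fun t => A (rows t) (g u)))
        = (∏ u, c (g u)) * (A.submatrix rows g).det := by
      rw [MultilinearMap.map_smul_univ]
      rw [smul_eq_mul]
      congr 1
      rw [← Matrix.det_transpose (A.submatrix rows g)]
      rfl
    rw [hterm]
    have hgmono : StrictMono g := by
      intro u u' huu
      exact hsep (cols u) (cols u') (hcols huu) _ (hgmem u) _ (hgmem u')
    exact mul_pos (Finset.prod_pos fun u _ => hc _ _ (hgmem u)) (hA r rows g hrows hgmono)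
  · rw [Fintype.piFinset_nonempty]
    exact fun u => hne (cols u)

theorem cramer_mulVec_self {m : ℕ} (B : Matrix (Fin m) (Fin m) ℝ) (v : Fin m → ℝ) :
    Matrix.cramer B (B *ᵥ v) = B.det • v := by
  rw [Matrix.cramer_eq_adjugate_mulVec, Matrix.mulVec_mulVec, Matrix.adjugate_mul,
    Matrix.smul_mulVec, Matrix.one_mulVec]

theorem pm_mul {a b : ℝ} (ha : a = 1 ∨ a = -1) (hb : b = 1 ∨ b = -1) :
    a * b = 1 ∨ a * b = -1 := by
  rcases ha with h | h <;> rcases hb with h' | h' <;> subst h <;> subst h' <;> norm_num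

theorem pm_pow (k : ℕ) : ((-1 : ℝ)) ^ k = 1 ∨ ((-1 : ℝ)) ^ k = -1 := by
  rcases Nat.even_or_odd k with h | h
  · left; exact h.neg_one_pow
  · right; exact h.neg_one_pow

theorem sign_decomp {u zz : ℝ} (hu : u = 1 ∨ u = -1) (h : 0 < zz * u) : zz = u * |zz| := by
  rcases hu with h1 | h1 <;> subst h1
  · rw [one_mul]; rw [mul_one] at h; exact (abs_of_pos h).symm
  · have : zz < 0 := by nlinarith
    rw [abs_of_neg this]; ring

theorem key_sign {N n s : ℕ} (A : Matrix (Fin N) (Fin n) ℝ) (hA : IsTP A)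
    (z : Fin n → ℝ) (φ : Fin n → ℕ) (ε₀ : ℝ) (hε : ε₀ = 1 ∨ ε₀ = -1)
    (hle : ∀ i, z i ≠ 0 → φ i ≤ s)
    (hmono : ∀ i i', z i ≠ 0 → z i' ≠ 0 → i < i' → φ i ≤ φ i')
    (hsign : ∀ i, z i ≠ 0 → 0 < z i * (ε₀ * (-1) ^ φ i))
    (hsurj : ∀ p, p ≤ s → ∃ i, z i ≠ 0 ∧ φ i = p)
    (i : Fin (s + 1) → Fin N) (hi : StrictMono i) (σ : ℝ) (hσ : σ = 1 ∨ σ = -1)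
    (hweak : ∀ q : Fin (s + 1), 0 ≤ σ * (-1) ^ (q : ℕ) * A.mulVec z (i q)) :
    σ = ε₀ := by
  classical
  set J : Fin (s + 1) → Finset (Fin n) :=
    fun p => Finset.univ.filter (fun j => z j ≠ 0 ∧ φ j = (p : ℕ)) with hJdef
  set c : Fin n → ℝ := fun j => |z j| with hcdef
  have hJmem : ∀ p j, j ∈ J p ↔ z j ≠ 0 ∧ φ j = (p : ℕ) := by
    intro p j; simp [hJdef]
  have hne : ∀ p, (J p).Nonempty := by
    intro p
    obtain ⟨j, hj1, hj2⟩ := hsurj p.val (Nat.lt_succ_iff.mp p.isLt)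
    exact ⟨j, (hJmem p j).mpr ⟨hj1, hj2⟩⟩
  have hc : ∀ p, ∀ j ∈ J p, 0 < c j := by
    intro p j hj
    exact abs_pos.mpr ((hJmem p j).mp hj).1
  have hsep : ∀ p p' : Fin (s + 1), p < p' → ∀ j ∈ J p, ∀ j' ∈ J p', j < j' := by
    intro p p' hpp j hj j' hj'
    obtain ⟨hz1, hp1⟩ := (hJmem p j).mp hj
    obtain ⟨hz2, hp2⟩ := (hJmem p' j').mp hj'
    have hval : (p : ℕ) < (p' : ℕ) := hpp
    by_contra hnlt
    push_neg at hnlt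
    rcases eq_or_lt_of_le hnlt with h | h
    · rw [← h] at hp1; omega
    · have := hmono j' j hz2 hz1 h; omega
  set B : Matrix (Fin N) (Fin (s + 1)) ℝ :=
    Matrix.of (fun i0 p => ∑ j ∈ J p, A i0 j * c j) with hBdef
  set ε : Fin (s + 1) → ℝ := fun p => ε₀ * (-1) ^ (p : ℕ) with hεdef
  have hεpm : ∀ p : Fin (s + 1), ε p = 1 ∨ ε p = -1 := fun p => pm_mul hε (pm_pow _)
  have hdecomp : ∀ i0 : Fin N, A.mulVec z i0 = ∑ p : Fin (s + 1), B i0 p * ε p := by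
    intro i0
    have h1 : A.mulVec z i0 = ∑ j : Fin n, A i0 j * z j := rfl
    have h2 : ∑ j : Fin n, A i0 j * z j
        = ∑ j ∈ Finset.univ.filter (fun j => z j ≠ 0), A i0 j * z j := by
      refine (Finset.sum_filter_of_ne ?_).symm
      intro j _ hne0 h0
      rw [h0, mul_zero] at hne0
      exact hne0 rfl
    have h3 : ∑ j ∈ Finset.univ.filter (fun j => z j ≠ 0), A i0 j * z j
        = ∑ p : Fin (s + 1), ∑ j ∈ (Finset.univ.filter (fun j => z j ≠ 0)).filter
            (fun j => (⟨min (φ j) s, by omega⟩ : Fin (s + 1)) = p), A i0 j * z j := by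
      rw [Finset.sum_fiberwise_of_maps_to (fun j _ => Finset.mem_univ _)]
    have h4 : ∀ p : Fin (s + 1), (Finset.univ.filter (fun j => z j ≠ 0)).filter
            (fun j => (⟨min (φ j) s, by omega⟩ : Fin (s + 1)) = p) = J p := by
      intro p
      ext j
      simp only [Finset.mem_filter, Finset.mem_univ, true_and, hJmem]
      constructor
      · rintro ⟨hzj, hfin⟩
        have := Fin.mk.injEq (min (φ j) s) _ (p : ℕ) p.isLt ▸ hfin
        have hv : min (φ j) s = (p : ℕ) := by
          have := congrArg Fin.val hfin; simpa using this
        exact ⟨hzj, by have := hle j hzj; omega⟩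
      · rintro ⟨hzj, hv⟩
        refine ⟨hzj, ?_⟩
        apply Fin.ext
        simp only
        have := hle j hzj; omega
    have h5 : ∀ p : Fin (s + 1), ∑ j ∈ J p, A i0 j * z j = B i0 p * ε p := by
      intro p
      have : ∀ j ∈ J p, A i0 j * z j = (A i0 j * c j) * ε p := by
        intro j hj
        obtain ⟨hzj, hpj⟩ := (hJmem p j).mp hj
        have hzeq : z j = ε p * c j := by
          have hs0 := hsign j hzj
          rw [hpj] at hs0
          exact sign_decomp (hεpm p) hs0
        rw [hzeq]; ring
      rw [Finset.sum_congr rfl this, ← Finset.sum_mul]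
      rfl
    rw [h1, h2, h3]
    exact Finset.sum_congr rfl fun p _ => by rw [h4 p, h5 p]
  set B' : Matrix (Fin (s + 1)) (Fin (s + 1)) ℝ := Matrix.of (fun q p => B (i q) p) with hB'def
  set w : Fin (s + 1) → ℝ := fun q => A.mulVec z (i q) with hwdef
  have hw : B' *ᵥ ε = w := by
    funext q
    rw [hwdef]
    simp only
    rw [hdecomp (i q)]
    rfl
  have hdetB' : 0 < B'.det := by
    have := blocks_det_pos A hA J c hne hc hsep i id hi strictMono_id
    exact this
  have hcr := cramer_mulVec_self B' ε
  rw [hw] at hcr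
  have h0 : B'.det * ε₀ = Matrix.cramer B' w 0 := by
    have := congrFun hcr 0
    rw [this]
    simp [hεdef]
  have hM : ∀ q : Fin (s + 1),
      0 < (B'.submatrix q.succAbove (Fin.succAbove 0)).det := by
    intro q
    have := blocks_det_pos A hA J c hne hc hsep (i ∘ q.succAbove) (Fin.succAbove 0)
      (hi.comp (Fin.strictMono_succAbove q)) (Fin.strictMono_succAbove 0)
    exact this
  have hexp : Matrix.cramer B' w 0
      = ∑ q : Fin (s + 1), (-1) ^ (q : ℕ) * w q *
          (B'.submatrix q.succAbove (Fin.succAbove 0)).det := by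
    rw [Matrix.cramer_apply, Matrix.det_succ_column _ 0]
    refine Finset.sum_congr rfl fun q _ => ?_
    rw [Matrix.updateCol_self, Matrix.submatrix_updateCol_succAbove]
    norm_num
  have hwne : w ≠ 0 := by
    intro hw0
    rw [hw0] at hcr
    have h1 : (Matrix.cramer B') (0 : Fin (s + 1) → ℝ) = 0 := map_zero _
    rw [h1] at hcr
    have h2 := congrFun hcr.symm 0
    simp only [Pi.smul_apply, Pi.zero_apply, smul_eq_mul, hεdef, Fin.val_zero, pow_zero,
      mul_one] at h2
    rcases hε with h | h <;> rw [h] at h2 <;> nlinarith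
  obtain ⟨q0, hq0⟩ := Function.ne_iff.mp hwne
  simp only [Pi.zero_apply] at hq0
  have hσsq : σ * σ = 1 := by rcases hσ with h | h <;> rw [h] <;> ring
  have hsum : B'.det * ε₀ = σ * ∑ q : Fin (s + 1), (σ * (-1) ^ (q : ℕ) * w q) *
      (B'.submatrix q.succAbove (Fin.succAbove 0)).det := by
    rw [h0, hexp, Finset.mul_sum]
    refine Finset.sum_congr rfl fun q _ => ?_
    have : σ * (σ * (-1) ^ (q : ℕ) * w q *
        (B'.submatrix q.succAbove (Fin.succAbove 0)).det)
        = (σ * σ) * ((-1) ^ (q : ℕ) * w q *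
          (B'.submatrix q.succAbove (Fin.succAbove 0)).det) := by ring
    rw [this, hσsq, one_mul]
  have hSpos : 0 < ∑ q : Fin (s + 1), (σ * (-1) ^ (q : ℕ) * w q) *
      (B'.submatrix q.succAbove (Fin.succAbove 0)).det := by
    refine Finset.sum_pos' (fun q _ => mul_nonneg (hweak q) (hM q).le) ⟨q0, Finset.mem_univ _, ?_⟩
    refine mul_pos ?_ (hM q0)
    rcases lt_or_eq_of_le (hweak q0) with h | h
    · exact h
    · exfalso
      have hpm := pm_mul hσ (pm_pow (q0 : ℕ))
      rcases hpm with h' | h' <;>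
        · rw [h'] at h
          refine hq0 ?_
          linarith
  rcases hσ with h | h <;> rcases hε with h' | h' <;> subst h <;> subst h' <;>
    linarith [hSpos, hdetB', hsum]

/-- C1: there is no weakly alternating selection of `sm z + 2` rows of `A *ᵥ z`. -/
theorem no_long_weak (A : Matrix (Fin N) (Fin n) ℝ) (hA : IsTP A)
    {z : Fin n → ℝ} (hz : z ≠ 0) (i : ℕ → Fin N)
    (himono : ∀ q q', q < q' → q' ≤ sm z + 1 → i q < i q')
    (σ : ℝ) (hσ : σ = 1 ∨ σ = -1)
    (hweak : ∀ q, q ≤ sm z + 1 → 0 ≤ σ * (-1) ^ q * A.mulVec z (i q)) : False := by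
  obtain ⟨ε₀, hε, hmono, hsign, hsurj, _⟩ := struct hz
  have h1 : σ = ε₀ := by
    refine key_sign A hA z (phi z) ε₀ hε (fun i hi => phi_le_sm hi) hmono hsign hsurj
      (fun q : Fin (sm z + 1) => i q.val)
      (fun q q' hqq => himono q.val q'.val hqq (by omega)) σ hσ
      (fun q => hweak q.val (by omega))
  have h2 : -σ = ε₀ := by
    refine key_sign A hA z (phi z) ε₀ hε (fun i hi => phi_le_sm hi) hmono hsign hsurj
      (fun q : Fin (sm z + 1) => i (q.val + 1))
      (fun q q' hqq => himono _ _ (by omega) (by omega)) (-σ)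
      (by rcases hσ with h | h <;> [right; left] <;> rw [h]; ring) ?_
    intro q
    have := hweak (q.val + 1) (by omega)
    calc (0:ℝ) ≤ σ * (-1) ^ (q.val + 1) * A.mulVec z (i (q.val + 1)) := this
    _ = -σ * (-1) ^ (q.val) * A.mulVec z (i (q.val + 1)) := by rw [pow_succ]; ring
  rcases hσ with h | h <;> rw [h] at h1 h2 <;> linarith

/-- variation diminishing property -/
theorem sm_mulVec_le (A : Matrix (Fin N) (Fin n) ℝ) (hA : IsTP A)
    {z : Fin n → ℝ} (hz : z ≠ 0) : sm (A.mulVec z) ≤ sm z := by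
  by_contra hlt
  push_neg at hlt
  have hAzne : A.mulVec z ≠ 0 := by
    intro h0
    rw [h0] at hlt
    have : sm (0 : Fin N → ℝ) = 0 := by
      have hempty : {p | ∃ j, AltOn (0 : Fin N → ℝ) p j} = ∅ := by
        ext p
        simp only [Set.mem_setOf_eq, Set.mem_empty_iff_false, iff_false]
        rintro ⟨j, hj⟩
        exact hj.2.1 0 (by omega) rfl
      rw [sm, hempty]
      exact csSup_empty
    omega
  obtain ⟨j, hj⟩ := exists_sm_chain hAzne
  set σ : ℝ := if 0 < A.mulVec z (j 0) then 1 else -1 with hσdef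
  have hσ : σ = 1 ∨ σ = -1 := by
    by_cases h : 0 < A.mulVec z (j 0)
    · left; simp [hσdef, h]
    · right; simp [hσdef, h]
  have h0 : 0 < σ * A.mulVec z (j 0) := by
    by_cases h : 0 < A.mulVec z (j 0)
    · simpa [hσdef, h] using h
    · have h1 : A.mulVec z (j 0) < 0 :=
        lt_of_le_of_ne (not_lt.mp h) (hj.2.1 0 (by omega))
      simp only [hσdef, if_neg h]
      nlinarith
  have hsgn := altOn_sign hj hσ h0
  exact no_long_weak A hA hz j
    (fun q q' h1 h2 => hj.1 q q' h1 (by omega))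
    σ hσ (fun q hq => (hsgn q (by omega)).le)

/-- L1 : if `sm` does not drop, the first entry of `A *ᵥ z` is nonzero. -/
theorem first_entry_ne (hN : 0 < N) (A : Matrix (Fin N) (Fin n) ℝ) (hA : IsTP A)
    {z : Fin n → ℝ} (hz : z ≠ 0) (hAz : A.mulVec z ≠ 0)
    (heq : sm (A.mulVec z) = sm z) : A.mulVec z ⟨0, hN⟩ ≠ 0 := by
  intro hzero
  obtain ⟨j, hj⟩ := exists_sm_chain hAz
  rw [heq] at hj
  set σ : ℝ := if 0 < A.mulVec z (j 0) then 1 else -1 with hσdef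
  have hσ : σ = 1 ∨ σ = -1 := by
    by_cases h : 0 < A.mulVec z (j 0)
    · left; simp [hσdef, h]
    · right; simp [hσdef, h]
  have h0 : 0 < σ * A.mulVec z (j 0) := by
    by_cases h : 0 < A.mulVec z (j 0)
    · simpa [hσdef, h] using h
    · have h1 : A.mulVec z (j 0) < 0 :=
        lt_of_le_of_ne (not_lt.mp h) (hj.2.1 0 (by omega))
      simp only [hσdef, if_neg h]
      nlinarith
  have hsgn := altOn_sign hj hσ h0
  have hj0 : (⟨0, hN⟩ : Fin N) < j 0 := by
    have hle0 : (⟨0, hN⟩ : Fin N) ≤ j 0 := by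
      simp [Fin.le_def]
    rcases eq_or_lt_of_le hle0 with h | h
    · exact absurd (h ▸ hzero) (hj.2.1 0 (by omega))
    · exact h
  have hσ' : -σ = 1 ∨ -σ = -1 := by
    rcases hσ with h | h <;> [right; left] <;> rw [h] <;> ring
  refine no_long_weak A hA hz (fun q => if q = 0 then ⟨0, hN⟩ else j (q - 1)) ?_ (-σ) hσ' ?_
  · intro q q' h1 h2
    by_cases hq : q = 0
    · simp only [hq, if_pos rfl, if_neg (by omega : q' ≠ 0)]
      rcases Nat.eq_zero_or_pos (q' - 1) with h' | h'
      · rw [h']; exact hj0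
      · exact lt_trans hj0 (hj.1 0 (q' - 1) h' (by omega))
    · simp only [if_neg hq, if_neg (by omega : q' ≠ 0)]
      exact hj.1 (q - 1) (q' - 1) (by omega) (by omega)
  · intro q hq
    by_cases hq0 : q = 0
    · subst hq0
      simp [hzero]
    · simp only [if_neg hq0]
      have ht := hsgn (q - 1) (by omega)
      have hpow : (-1 : ℝ) ^ q = -(-1 : ℝ) ^ (q - 1) := by
        have hq1 : q = (q - 1) + 1 := by omega
        conv_lhs => rw [hq1]
        rw [pow_succ]
        ring
      rw [hpow]
      calc (0:ℝ) ≤ σ * (-1) ^ (q - 1) * A.mulVec z (j (q - 1)) := ht.le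
      _ = -σ * -(-1) ^ (q - 1) * A.mulVec z (j (q - 1)) := by ring


theorem tp_det_pos {m : ℕ} (A : Matrix (Fin m) (Fin m) ℝ) (hA : IsTP A) : 0 < A.det := by
  have := hA m id id strictMono_id strictMono_id
  rwa [Matrix.submatrix_id_id] at this

theorem tp_mulVec_ne_zero {m : ℕ} (A : Matrix (Fin m) (Fin m) ℝ) (hA : IsTP A)
    {v : Fin m → ℝ} (hv : v ≠ 0) : A.mulVec v ≠ 0 := by
  intro h0
  have hdet := tp_det_pos A hA
  have h1 : Matrix.cramer A (A *ᵥ v) = A.det • v := cramer_mulVec_self A v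
  rw [h0, map_zero] at h1
  refine hv (funext fun t => ?_)
  have h2 := congrFun h1.symm t
  simp only [Pi.smul_apply, Pi.zero_apply, smul_eq_mul] at h2
  have : A.det ≠ 0 := ne_of_gt hdet
  exact (mul_eq_zero.mp h2).resolve_left this

/-- L2 : if additionally `z 0 ≠ 0`, the signs of the first entries agree. -/
theorem first_entry_sign (hN : 0 < N) (hn : 0 < n) (A : Matrix (Fin N) (Fin n) ℝ)
    (hA : IsTP A) {z : Fin n → ℝ} (hz : z ≠ 0) (hz0 : z ⟨0, hn⟩ ≠ 0)
    (hAz : A.mulVec z ≠ 0) (heq : sm (A.mulVec z) = sm z) :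
    0 < A.mulVec z ⟨0, hN⟩ * z ⟨0, hn⟩ := by
  have hw0 : A.mulVec z ⟨0, hN⟩ ≠ 0 := first_entry_ne hN A hA hz hAz heq
  obtain ⟨j, hj⟩ := exists_sm_chain hAz
  rw [heq] at hj
  -- get a maximal chain for `A *ᵥ z` starting at the index 0
  have hchain : ∃ jj, AltOn (A.mulVec z) (sm z) jj ∧ jj 0 = ⟨0, hN⟩ := by
    have hle0 : (⟨0, hN⟩ : Fin N) ≤ j 0 := by simp [Fin.le_def]
    rcases eq_or_lt_of_le hle0 with hcase | hcase
    · exact ⟨j, hj, hcase.symm⟩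
    · rcases lt_or_gt_of_ne (mul_ne_zero hw0 (hj.2.1 0 (by omega))) with hopp | hsame
      · -- opposite signs: prepending gives a longer chain, contradiction
        exfalso
        have hc := altOn_cons hj hcase hopp
        have := altOn_le_sm hc
        rw [heq] at this
        omega
      · refine ⟨Function.update j 0 ⟨0, hN⟩, ⟨?_, ?_, ?_⟩, Function.update_self _ _ _⟩
        · intro q q' h1 h2
          rw [Function.update_of_ne (by omega : q' ≠ 0)]
          by_cases hq : q = 0
          · rw [hq, Function.update_self]
            rcases Nat.eq_zero_or_pos (q' - 1) with h' | h'
            · have : q' = 1 := by omega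
              rw [this]
              exact lt_trans hcase (hj.1 0 1 (by omega) (by omega))
            · exact lt_trans hcase (hj.1 0 q' (by omega) h2)
          · rw [Function.update_of_ne hq]
            exact hj.1 q q' h1 h2
        · intro q hq
          by_cases hq0 : q = 0
          · rw [hq0, Function.update_self]; exact hw0
          · rw [Function.update_of_ne hq0]; exact hj.2.1 q hq
        · intro q hq
          by_cases hq0 : q = 0
          · rw [hq0, Function.update_self, Function.update_of_ne (by omega : (0:ℕ) + 1 ≠ 0)]
            have h1 := hj.2.2 0 (by omega)
            have h2 : A.mulVec z (j 1) * A.mulVec z (j 0) < 0 := by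
              rw [mul_comm] at h1; exact h1
            have h3 : 0 < A.mulVec z (j 0) * A.mulVec z ⟨0, hN⟩ := by
              rw [mul_comm] at hsame; exact hsame
            have := sign_trans1 h2 h3
            rw [mul_comm] at this
            exact this
          · rw [Function.update_of_ne hq0, Function.update_of_ne (by omega : q + 1 ≠ 0)]
            exact hj.2.2 q hq
  obtain ⟨jj, hjj, hjj0⟩ := hchain
  set w0 : ℝ := A.mulVec z ⟨0, hN⟩ with hw0def
  set σ : ℝ := if 0 < w0 then 1 else -1 with hσdef
  have hσ : σ = 1 ∨ σ = -1 := by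
    by_cases h : 0 < w0
    · left; simp [hσdef, h]
    · right; simp [hσdef, h]
  have h0 : 0 < σ * A.mulVec z (jj 0) := by
    rw [hjj0]
    by_cases h : 0 < w0
    · rw [hσdef, if_pos h, one_mul]; exact h
    · have h1 : w0 < 0 := lt_of_le_of_ne (not_lt.mp h) hw0
      simp only [hσdef, if_neg h]
      nlinarith
  have hsgn := altOn_sign hjj hσ h0
  obtain ⟨ε₀, hε, hmono, hsign, hsurj, hfirst⟩ := struct hz
  have hkey : σ = ε₀ := by
    refine key_sign A hA z (phi z) ε₀ hε (fun i hi => phi_le_sm hi) hmono hsign hsurj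
      (fun q : Fin (sm z + 1) => jj q.val)
      (fun q q' hqq => hjj.1 q.val q'.val hqq (Nat.lt_succ_iff.mp q'.isLt)) σ hσ
      (fun q => (hsgn q.val (Nat.lt_succ_iff.mp q.isLt)).le)
  have hz0sign : 0 < z ⟨0, hn⟩ * ε₀ := by
    refine hfirst ⟨0, hn⟩ hz0 ?_
    intro t ht
    exact absurd (Fin.lt_def.mp ht) (Nat.not_lt_zero _)
  have h0' : 0 < σ * w0 := by
    rw [hw0def]
    have := h0; rwa [hjj0] at this
  have hσsq : σ * σ = 1 := by rcases hσ with h | h <;> rw [h] <;> ring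
  have hz0sign' : 0 < z ⟨0, hn⟩ * σ := by rw [hkey]; exact hz0sign
  have hp := mul_pos h0' hz0sign'
  have hre : (σ * w0) * (z ⟨0, hn⟩ * σ) = (σ * σ) * (w0 * z ⟨0, hn⟩) := by ring
  rw [hre, hσsq, one_mul] at hp
  exact hp

end TPproof

namespace TPproof
theorem ftc_mulVec {n : ℕ} (f : (Fin n → ℝ) → Fin n → ℝ) (hf : ContDiff ℝ 1 f)
    (a b : Fin n → ℝ) :
    f a - f b
      = (Matrix.of fun i j => ∫ r in (0:ℝ)..1, jac f (r • a + (1 - r) • b) i j).mulVec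
          (a - b) := by
  classical
  set γ : ℝ → (Fin n → ℝ) := fun r => r • a + (1 - r) • b with hγdef
  have hγeq : γ = fun r => b + r • (a - b) := by
    funext r t
    simp [hγdef]
    ring
  have hγd : ∀ r : ℝ, HasDerivAt γ (a - b) r := by
    intro r
    have h1 : HasDerivAt (fun y : ℝ => b + y • (a - b))
        ((0 : Fin n → ℝ) + (1 : ℝ) • (a - b)) r :=
      (hasDerivAt_const r b).add ((hasDerivAt_id r).smul_const (a - b))
    rw [zero_add, one_smul] at h1
    rw [hγeq]
    exact h1
  have hγc : Continuous γ := by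
    rw [hγeq]
    continuity
  have hdiff := hf.differentiable one_ne_zero
  have hdc : ∀ (r : ℝ) (i : Fin n),
      HasDerivAt (fun u => f (γ u) i) ((fderiv ℝ f (γ r)) (a - b) i) r := by
    intro r i
    have hdf : HasFDerivAt f (fderiv ℝ f (γ r)) (γ r) := (hdiff (γ r)).hasFDerivAt
    have h2 := hdf.comp_hasDerivAt r (hγd r)
    have h3 := (ContinuousLinearMap.proj (R := ℝ) (φ := fun _ : Fin n => ℝ)
      i).hasFDerivAt.comp_hasDerivAt r h2
    exact h3
  have hcontJ : Continuous fun r => fderiv ℝ f (γ r) :=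
    (hf.continuous_fderiv one_ne_zero).comp hγc
  have hconta : ∀ v : Fin n → ℝ, ∀ i : Fin n,
      Continuous fun r => (fderiv ℝ f (γ r)) v i :=
    fun v i => (continuous_apply i).comp (hcontJ.clm_apply continuous_const)
  have hint : ∀ i : Fin n,
      ∫ r in (0:ℝ)..1, (fderiv ℝ f (γ r)) (a - b) i = f a i - f b i := by
    intro i
    have h1 := intervalIntegral.integral_eq_sub_of_hasDerivAt
      (f := fun u => f (γ u) i) (f' := fun r => (fderiv ℝ f (γ r)) (a - b) i)
      (fun r _ => hdc r i) ((hconta (a - b) i).intervalIntegrable 0 1)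
    rw [h1]
    have h2 : γ 1 = a := by funext t; simp [hγdef]
    have h3 : γ 0 = b := by funext t; simp [hγdef]
    show f (γ 1) i - f (γ 0) i = f a i - f b i
    rw [h2, h3]
  have hexp : ∀ (x : Fin n → ℝ) (i : Fin n),
      (fderiv ℝ f x) (a - b) i = ∑ j, jac f x i j * (a - b) j := by
    intro x i
    have hab : (a - b) = ∑ j, (a - b) j • (Pi.single j 1 : Fin n → ℝ) := by
      conv_lhs => rw [pi_eq_sum_univ (a - b)]
      refine Finset.sum_congr rfl fun j _ => ?_
      congr 1
      funext k
      simp [Pi.single_apply, eq_comm]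
    conv_lhs => rw [hab]
    rw [map_sum]
    rw [Finset.sum_apply]
    refine Finset.sum_congr rfl fun j _ => ?_
    rw [ContinuousLinearMap.map_smul]
    simp [jac, mul_comm]
  funext i
  have hmv : (Matrix.of fun i j => ∫ r in (0:ℝ)..1, jac f (γ r) i j).mulVec (a - b) i
      = ∑ j, (∫ r in (0:ℝ)..1, jac f (γ r) i j) * (a - b) j := rfl
  have hsub : (f a - f b) i = f a i - f b i := rfl
  rw [hsub, hmv]
  have hstep : ∀ j : Fin n, (∫ r in (0:ℝ)..1, jac f (γ r) i j) * (a - b) j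
      = ∫ r in (0:ℝ)..1, jac f (γ r) i j * (a - b) j := by
    intro j
    rw [intervalIntegral.integral_mul_const]
  rw [Finset.sum_congr rfl fun j _ => hstep j]
  have hsum : ∑ j, ∫ r in (0:ℝ)..1, jac f (γ r) i j * (a - b) j
      = ∫ r in (0:ℝ)..1, ∑ j, jac f (γ r) i j * (a - b) j := by
    rw [← intervalIntegral.integral_finset_sum]
    intro j _
    have : Continuous fun r => jac f (γ r) i j * (a - b) j :=
      ((hconta (Pi.single j 1) i)).mul continuous_const
    exact this.intervalIntegrable 0 1
  rw [hsum]
  have : ∀ r : ℝ, ∑ j, jac f (γ r) i j * (a - b) j = (fderiv ℝ f (γ r)) (a - b) i :=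
    fun r => (hexp (γ r) i).symm
  rw [intervalIntegral.integral_congr (fun r _ => this r)]
  exact (hint i).symm

end TPproof

open TPproof in
theorem stmt11 (n : ℕ)
    (Ω : Set (Fin n → ℝ)) (hΩc : IsCompact Ω) (hΩconv : Convex ℝ Ω)
    (f : (Fin n → ℝ) → (Fin n → ℝ)) (hf : ContDiff ℝ 1 f)
    (hinv : ∀ a ∈ Ω, f a ∈ Ω)
    (hTP : ∀ a ∈ Ω, ∀ b ∈ Ω,
      IsTP (Matrix.of fun i j => ∫ r in (0:ℝ)..1, jac f (r • a + (1 - r) • b) i j))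
    (a : Fin n → ℝ) (ha : a ∈ Ω)
    (x : ℕ → Fin n → ℝ) (hx0 : x 0 = a) (hxs : ∀ k, x (k + 1) = f (x k)) :
    ∃ e ∈ Ω, f e = e ∧ Tendsto x atTop (nhds e) := by
  classical
  have hxΩ : ∀ k, x k ∈ Ω := by
    intro k
    induction k with
    | zero => rw [hx0]; exact ha
    | succ k ih => rw [hxs k]; exact hinv _ ih
  set F : (Fin n → ℝ) → (Fin n → ℝ) → Matrix (Fin n) (Fin n) ℝ :=
    fun u v => Matrix.of fun i j => ∫ r in (0:ℝ)..1, jac f (r • u + (1 - r) • v) i j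
    with hFdef
  have hF : ∀ u v, f u - f v = (F u v).mulVec (u - v) := fun u v => ftc_mulVec f hf u v
  have hFTP : ∀ u ∈ Ω, ∀ v ∈ Ω, IsTP (F u v) := hTP
  set z : ℕ → Fin n → ℝ := fun k => x (k + 1) - x k with hzdef
  have hzstep : ∀ k, z (k + 1) = (F (x (k + 1)) (x k)).mulVec (z k) := by
    intro k
    have : z (k + 1) = f (x (k + 1)) - f (x k) := by
      rw [hzdef]
      simp only
      rw [hxs (k + 1), hxs k]
    rw [this, hF]
  by_cases hzero : ∃ k, z k = 0
  · obtain ⟨k0, hk0⟩ := hzero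
    have hxeq : x (k0 + 1) = x k0 := sub_eq_zero.mp hk0
    have hconst : ∀ m, x (k0 + m) = x k0 := by
      intro m
      induction m with
      | zero => rfl
      | succ m ih =>
        rw [← Nat.add_assoc, hxs (k0 + m), ih, ← hxs k0, hxeq]
    refine ⟨x k0, hxΩ k0, ?_, ?_⟩
    · rw [← hxs k0]; exact hxeq
    · refine tendsto_atTop_of_eventually_const (i₀ := k0) ?_
      intro k hk
      have h1 : k0 + (k - k0) = k := by omega
      rw [← h1, hconst]
  · push_neg at hzero
    have hn : 0 < n := by
      obtain ⟨i, _⟩ := Function.ne_iff.mp (hzero 0)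
      exact i.pos
    set i0 : Fin n := ⟨0, hn⟩ with hi0def
    have hzne : ∀ k, z k ≠ 0 := hzero
    have hsmd : ∀ k, sm (z (k + 1)) ≤ sm (z k) := by
      intro k
      rw [hzstep k]
      exact sm_mulVec_le _ (hFTP _ (hxΩ _) _ (hxΩ _)) (hzne k)
    have hsmmono : ∀ k m, k ≤ m → sm (z m) ≤ sm (z k) := by
      intro k m hkm
      induction m, hkm using Nat.le_induction with
      | base => exact le_rfl
      | succ m hkm ih => exact le_trans (hsmd m) ih
    obtain ⟨K, hK⟩ : ∃ K, ∀ k, K ≤ k → sm (z k) = sm (z K) := by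
      obtain ⟨K, hKdef⟩ : sInf (Set.range fun k => sm (z k)) ∈ Set.range fun k => sm (z k) :=
        Nat.sInf_mem ⟨sm (z 0), 0, rfl⟩
      refine ⟨K, fun k hk => le_antisymm (hsmmono K k hk) ?_⟩
      have h3 : sm (z K) = sInf (Set.range fun k => sm (z k)) := hKdef
      rw [h3]
      exact Nat.sInf_le ⟨k, rfl⟩
    have hsmeq : ∀ k, K ≤ k → sm (z (k + 1)) = sm (z k) := by
      intro k hk
      rw [hK (k + 1) (by omega), hK k hk]
    have hne0 : ∀ k, K ≤ k → z (k + 1) i0 ≠ 0 := by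
      intro k hk
      have heq : sm ((F (x (k + 1)) (x k)).mulVec (z k)) = sm (z k) := by
        rw [← hzstep k]; exact hsmeq k hk
      have := first_entry_ne hn _ (hFTP _ (hxΩ _) _ (hxΩ _)) (hzne k)
        (by rw [← hzstep k]; exact hzne (k + 1)) heq
      rw [← hzstep k] at this
      exact this
    have hsign : ∀ k, K + 1 ≤ k → 0 < z (k + 1) i0 * z k i0 := by
      intro k hk
      have h1 : z k i0 ≠ 0 := by
        have := hne0 (k - 1) (by omega)
        rwa [(by omega : k - 1 + 1 = k)] at this
      have heq : sm ((F (x (k + 1)) (x k)).mulVec (z k)) = sm (z k) := by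
        rw [← hzstep k]; exact hsmeq k (by omega)
      have := first_entry_sign hn hn _ (hFTP _ (hxΩ _) _ (hxΩ _)) (hzne k) h1
        (by rw [← hzstep k]; exact hzne (k + 1)) heq
      rwa [← hzstep k] at this
    have hprod : ∀ k, K + 1 ≤ k → 0 < z k i0 * z (K + 1) i0 := by
      intro k hk
      induction k, hk using Nat.le_induction with
      | base =>
        have h1 : z (K + 1) i0 ≠ 0 := hne0 K (by omega)
        rcases h1.lt_or_gt with h | h
        · exact mul_pos_of_neg_of_neg h h
        · exact mul_pos h h
      | succ k hk ih => exact sign_trans3 (hsign k hk) ih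
    -- convergence of the first coordinate
    have hbddA : BddAbove (Set.range fun k => x k i0) := by
      obtain ⟨R, hR⟩ := (hΩc.image (continuous_apply i0)).bddAbove
      refine ⟨R, ?_⟩
      rintro r ⟨k, rfl⟩
      exact hR ⟨x k, hxΩ k, rfl⟩
    have hbddB : BddBelow (Set.range fun k => x k i0) := by
      obtain ⟨R, hR⟩ := (hΩc.image (continuous_apply i0)).bddBelow
      refine ⟨R, ?_⟩
      rintro r ⟨k, rfl⟩
      exact hR ⟨x k, hxΩ k, rfl⟩
    obtain ⟨c₀, hc₀⟩ : ∃ c₀, Tendsto (fun k => x k i0) atTop (nhds c₀) := by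
      have hmonotail : (∀ j : ℕ, 0 < z (j + (K + 1)) i0) ∨ (∀ j : ℕ, z (j + (K + 1)) i0 < 0) := by
        have h1 : z (K + 1) i0 ≠ 0 := hne0 K (by omega)
        rcases h1.lt_or_gt with hneg | hpos
        · right
          intro j
          have := hprod (j + (K + 1)) (by omega)
          nlinarith
        · left
          intro j
          have := hprod (j + (K + 1)) (by omega)
          nlinarith
      have hu : ∀ j : ℕ, x (j + (K + 1) + 1) i0 - x (j + (K + 1)) i0 = z (j + (K + 1)) i0 := by
        intro j
        rw [hzdef]
        simp
      rcases hmonotail with hcase | hcase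
      · have hmono : Monotone fun j => x (j + (K + 1)) i0 := by
          refine monotone_nat_of_le_succ fun j => ?_
          have h2 := hu j
          have h3 := hcase j
          have : (j + 1) + (K + 1) = j + (K + 1) + 1 := by omega
          rw [this]
          linarith
        rcases tendsto_of_monotone hmono with h | ⟨c, hc⟩
        · exfalso
          obtain ⟨R, hR⟩ := hbddA
          obtain ⟨j, hj⟩ := (tendsto_atTop.mp h (R + 1)).exists
          have : x (j + (K + 1)) i0 ≤ R := hR ⟨j + (K + 1), rfl⟩
          linarith
        · exact ⟨c, (tendsto_add_atTop_iff_nat (K + 1)).mp hc⟩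
      · have hmono : Antitone fun j => x (j + (K + 1)) i0 := by
          refine antitone_nat_of_succ_le fun j => ?_
          have h2 := hu j
          have h3 := hcase j
          have : (j + 1) + (K + 1) = j + (K + 1) + 1 := by omega
          rw [this]
          linarith
        rcases tendsto_of_antitone hmono with h | ⟨c, hc⟩
        · exfalso
          obtain ⟨R, hR⟩ := hbddB
          obtain ⟨j, hj⟩ := (tendsto_atBot.mp h (R - 1)).exists
          have : R ≤ x (j + (K + 1)) i0 := hR ⟨j + (K + 1), rfl⟩
          linarith
        · exact ⟨c, (tendsto_add_atTop_iff_nat (K + 1)).mp hc⟩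
    -- iterates
    have hiter : ∀ m k, x (k + m) = f^[m] (x k) := by
      intro m
      induction m with
      | zero => intro k; simp
      | succ m ih =>
        intro k
        rw [← Nat.add_assoc, hxs (k + m), ih k, ← Function.iterate_succ_apply' f m (x k)]
    have hcontiter : ∀ m : ℕ, Continuous (f^[m]) := fun m => (hf.continuous).iterate m
    -- every subsequential limit is a fixed point in Ω with first coordinate c₀
    have hlim : ∀ (p : Fin n → ℝ) (ψ : ℕ → ℕ), Tendsto ψ atTop atTop →
        Tendsto (fun j => x (ψ j)) atTop (nhds p) → p ∈ Ω ∧ f p = p ∧ p i0 = c₀ := by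
      intro p ψ hψ hψt
      have hpΩ : p ∈ Ω :=
        hΩc.isClosed.mem_of_tendsto hψt (Eventually.of_forall fun j => hxΩ _)
      have hym : ∀ m : ℕ, Tendsto (fun j => x (ψ j + m)) atTop (nhds (f^[m] p)) := by
        intro m
        have heqq : (fun j => x (ψ j + m)) = (f^[m]) ∘ (fun j => x (ψ j)) :=
          funext fun j => hiter m (ψ j)
        rw [heqq]
        exact (((hcontiter m).tendsto p).comp hψt)
      have hcoord : ∀ m : ℕ, (f^[m] p) i0 = c₀ := by
        intro m
        have h1 : Tendsto (fun j => x (ψ j + m) i0) atTop (nhds ((f^[m] p) i0)) :=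
          ((continuous_apply i0).tendsto _).comp (hym m)
        have h2 : Tendsto (fun j => x (ψ j + m) i0) atTop (nhds c₀) := by
          refine hc₀.comp ?_
          exact tendsto_atTop_mono (fun j => Nat.le_add_right _ _) hψ
        exact tendsto_nhds_unique h1 h2
      have hyΩ : ∀ m : ℕ, f^[m] p ∈ Ω := by
        intro m
        induction m with
        | zero => simpa using hpΩ
        | succ m ih => rw [Function.iterate_succ_apply' f m p]; exact hinv _ ih
      have hfp : f p = p := by
        by_contra hne
        set w : ℕ → Fin n → ℝ := fun m => f^[m + 1] p - f^[m] p with hwdef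
        have hwstep : ∀ m, w (m + 1) = (F (f^[m + 1] p) (f^[m] p)).mulVec (w m) := by
          intro m
          have : w (m + 1) = f (f^[m + 1] p) - f (f^[m] p) := by
            rw [hwdef]
            simp only
            rw [Function.iterate_succ_apply' f (m + 1) p, Function.iterate_succ_apply' f m p]
          rw [this, hF]
        have hw0 : w 0 ≠ 0 := by
          rw [hwdef]
          simp only [Function.iterate_one, Function.iterate_zero, id_eq, zero_add]
          exact sub_ne_zero.mpr hne
        have hwne : ∀ m, w m ≠ 0 := by
          intro m
          induction m with
          | zero => exact hw0
          | succ m ih =>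
            rw [hwstep m]
            exact tp_mulVec_ne_zero _ (hFTP _ (hyΩ _) _ (hyΩ _)) ih
        have hwc : ∀ m, w m i0 = 0 := by
          intro m
          rw [hwdef]
          simp only [Pi.sub_apply]
          rw [hcoord (m + 1), hcoord m, sub_self]
        have hdec : ∀ m, sm (w (m + 1)) < sm (w m) := by
          intro m
          have h1 : sm (w (m + 1)) ≤ sm (w m) := by
            rw [hwstep m]
            exact sm_mulVec_le _ (hFTP _ (hyΩ _) _ (hyΩ _)) (hwne m)
          rcases eq_or_lt_of_le h1 with h | h
          · exfalso
            have heqs : sm ((F (f^[m + 1] p) (f^[m] p)).mulVec (w m)) = sm (w m) := by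
              rw [← hwstep m]; exact h
            have := first_entry_ne hn _ (hFTP _ (hyΩ _) _ (hyΩ _)) (hwne m)
              (by rw [← hwstep m]; exact hwne (m + 1)) heqs
            rw [← hwstep m] at this
            exact this (hwc (m + 1))
          · exact h
        have hdesc : ∀ m, sm (w m) + m ≤ sm (w 0) := by
          intro m
          induction m with
          | zero => omega
          | succ m ih =>
            have := hdec m
            omega
        have := hdesc (sm (w 0) + 1)
        omega
      exact ⟨hpΩ, hfp, by simpa using hcoord 0⟩
    obtain ⟨e, heΩ, ψ, hψ, hψt⟩ := hΩc.tendsto_subseq (fun k => hxΩ k)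
    have he := hlim e ψ hψ.tendsto_atTop hψt
    refine ⟨e, heΩ, he.2.1, ?_⟩
    refine tendsto_of_subseq_tendsto fun ns hns => ?_
    obtain ⟨p, hpΩ, φ, hφ, hφt⟩ := hΩc.tendsto_subseq (fun j => hxΩ (ns j))
    have hp := hlim p (ns ∘ φ) (hns.comp hφ.tendsto_atTop) hφt
    refine ⟨φ, ?_⟩
    have hpe : p = e := by
      by_contra hpe
      have hwne : p - e ≠ 0 := sub_ne_zero.mpr hpe
      have hweq : (F p e).mulVec (p - e) = p - e := by
        rw [← hF p e, hp.2.1, he.2.1]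
      have heqs : sm ((F p e).mulVec (p - e)) = sm (p - e) := by rw [hweq]
      have hfe := first_entry_ne hn _ (hFTP _ hp.1 _ he.1) hwne
        (by rw [hweq]; exact hwne) heqs
      rw [hweq] at hfe
      refine hfe ?_
      simp only [Pi.sub_apply]
      rw [hp.2.2, he.2.2, sub_self]
    rw [hpe] at hφt
    exact hφt
end

section
/- Let A : [0,1] → ℝ^{2×2} be a continuous matrix function such that A(t) is symmetric and TP for every t ∈ [0,1]. Then ∫₀¹ A(t) dt is TP. -/
open Matrix MeasureTheory Filter Topology

private lemma pos_integral {f : ℝ → ℝ} (hf : Continuous f)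
    (hpos : ∀ t ∈ Set.Icc (0:ℝ) 1, 0 < f t) : 0 < ∫ t in (0:ℝ)..1, f t :=
  intervalIntegral.intervalIntegral_pos_of_pos_on (hf.intervalIntegrable 0 1)
    (fun x hx => hpos x ⟨hx.1.le, hx.2.le⟩) one_pos

private lemma sm1 {α : Type*} [Preorder α] (f : Fin 1 → α) : StrictMono f :=
  fun a b h => absurd (Fin.lt_iff_val_lt_val.mp h) (by omega)

theorem stmt13 (A : ℝ → Matrix (Fin 2) (Fin 2) ℝ)
    (hcont : ∀ i j : Fin 2, Continuous fun t => A t i j)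
    (hsym : ∀ t ∈ Set.Icc (0:ℝ) 1, (A t).IsSymm)
    (hTP : ∀ t ∈ Set.Icc (0:ℝ) 1, IsTP (A t)) :
    IsTP (Matrix.of fun i j => ∫ t in (0:ℝ)..1, A t i j) := by
  -- pointwise entry positivity
  have hentry : ∀ t ∈ Set.Icc (0:ℝ) 1, ∀ i j, 0 < A t i j := by
    intro t ht i j
    have := hTP t ht 1 ![i] ![j] (sm1 _) (sm1 _)
    rw [Matrix.det_fin_one] at this
    simpa using this
  -- pointwise determinant positivity
  have hdet : ∀ t ∈ Set.Icc (0:ℝ) 1,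
      0 < A t 0 0 * A t 1 1 - A t 0 1 * A t 1 0 := by
    intro t ht
    have := hTP t ht 2 id id strictMono_id strictMono_id
    simpa [Matrix.det_fin_two] using this
  -- integral entries positive
  have hIpos : ∀ i j, 0 < ∫ t in (0:ℝ)..1, A t i j := fun i j =>
    pos_integral (hcont i j) (fun t ht => hentry t ht i j)
  set Ia : ℝ := ∫ t in (0:ℝ)..1, A t 0 0 with hIa
  set Ib : ℝ := ∫ t in (0:ℝ)..1, A t 0 1 with hIb
  set Ic : ℝ := ∫ t in (0:ℝ)..1, A t 1 1 with hIc
  have hIb' : (∫ t in (0:ℝ)..1, A t 1 0) = Ib := by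
    apply intervalIntegral.integral_congr
    intro t ht
    rw [Set.uIcc_of_le (by norm_num : (0:ℝ) ≤ 1)] at ht
    exact (hsym t ht).apply 0 1
  have hIcpos : 0 < Ic := hIpos 1 1
  have hIapos : 0 < Ia := hIpos 0 0
  set l : ℝ := Ib / Ic with hl
  -- the quadratic trick
  have hK : 0 < ∫ t in (0:ℝ)..1, (A t 0 0 - 2 * l * A t 0 1 + l ^ 2 * A t 1 1) := by
    apply pos_integral
    · exact ((hcont 0 0).sub (continuous_const.mul (hcont 0 1))).add
        (continuous_const.mul (hcont 1 1))
    · intro t ht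
      have h1 := hentry t ht 1 1
      have h2 := hdet t ht
      have hs := (hsym t ht).apply 0 1
      rw [hs] at h2
      nlinarith [sq_nonneg (l * A t 1 1 - A t 0 1), mul_pos h1 h1]
  have hKval : (∫ t in (0:ℝ)..1, (A t 0 0 - 2 * l * A t 0 1 + l ^ 2 * A t 1 1))
      = Ia - 2 * l * Ib + l ^ 2 * Ic := by
    rw [intervalIntegral.integral_add (f := fun t => A t 0 0 - 2 * l * A t 0 1)
        (g := fun t => l ^ 2 * A t 1 1) (((hcont 0 0).sub
        (continuous_const.mul (hcont 0 1))).intervalIntegrable 0 1)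
        ((continuous_const.mul (hcont 1 1)).intervalIntegrable 0 1),
      intervalIntegral.integral_sub (f := fun t => A t 0 0) (g := fun t => 2 * l * A t 0 1)
        ((hcont 0 0).intervalIntegrable 0 1)
        ((continuous_const.mul (hcont 0 1)).intervalIntegrable 0 1),
      intervalIntegral.integral_const_mul, intervalIntegral.integral_const_mul]
  rw [hKval] at hK
  have hquad : 0 < Ia * Ic - Ib ^ 2 := by
    have hmul : (Ia - 2 * l * Ib + l ^ 2 * Ic) * Ic = Ia * Ic - Ib ^ 2 := by
      rw [hl]; field_simp; ring
    nlinarith [mul_pos hK hIcpos]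
  -- now the main claim
  intro r rows cols hrows hcols
  match r, rows, cols, hrows, hcols with
  | 0, rows, cols, _, _ => simp [Matrix.det_isEmpty]
  | 1, rows, cols, _, _ =>
    simpa [Matrix.det_fin_one] using hIpos (rows 0) (cols 0)
  | 2, rows, cols, hr, hc =>
    have hid : ∀ f : Fin 2 → Fin 2, StrictMono f → f = id := by decide
    rw [hid rows hr, hid cols hc, Matrix.submatrix_id_id]
    simp only [Matrix.det_fin_two, Matrix.of_apply]
    rw [hIb']
    nlinarith [hquad]
  | (n+3), rows, cols, hr, hc =>
    exact absurd (Fintype.card_le_of_injective rows hr.injective) (by simp)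
end
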